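/- arXiv:1110.0699 — 5 statements merged into one kernel-verified Lean document; each statement's English description precedes it below -/
import Mathlib

section
/- Let α be a continuous action of a countable sofic group G on a compact metrizable space X, let Σ be a sofic approximation sequence for G, let ρ be a compatible metric on X, and let f : X → ℝ be continuous. Then for every G-invariant Borel probability measure μ on X, P_{Σ,∞}(f,X,G,ρ) ≥ h_{Σ,μ,∞}(ρ) + ∫_X f dμ. -/
open Filter MeasureTheory
open scoped Pointwise Classical BigOperators

namespace Sofic

structure ContAction (G : Type*) [Group G] (X : Type*) [TopologicalSpace X]
    (α : G → X → X) : Prop where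
  one : ∀ x, α 1 x = x
  mul : ∀ s t x, α (s * t) x = α s (α t x)
  cont : ∀ s, Continuous (α s)

structure IsContPseudoMetric (X : Type*) [TopologicalSpace X] (ρ : X → X → ℝ) : Prop where
  nonneg : ∀ x y, 0 ≤ ρ x y
  refl : ∀ x, ρ x x = 0
  symm : ∀ x y, ρ x y = ρ y x
  triangle : ∀ x y z, ρ x z ≤ ρ x y + ρ y z
  cont : Continuous fun p : X × X => ρ p.1 p.2

structure IsCompatMetric (X : Type*) [TopologicalSpace X] (ρ : X → X → ℝ)
    extends IsContPseudoMetric X ρ : Prop where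
  eq_of_zero : ∀ x y, ρ x y = 0 → x = y
  ball_mem : ∀ x : X, ∀ U ∈ nhds x, ∃ ε > 0, {y | ρ x y < ε} ⊆ U

structure IsSoficApprox (G : Type*) [Group G] (d : ℕ → ℕ)
    (σ : ∀ i, G → Equiv.Perm (Fin (d i))) : Prop where
  mul : ∀ s t : G, Tendsto
    (fun i => ((Finset.univ.filter fun a : Fin (d i) => σ i s (σ i t a) = σ i (s * t) a).card : ℝ) / (d i : ℝ))
    atTop (nhds 1)
  sep : ∀ s t : G, s ≠ t → Tendsto
    (fun i => ((Finset.univ.filter fun a : Fin (d i) => σ i s a ≠ σ i t a).card : ℝ) / (d i : ℝ))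
    atTop (nhds 1)
  dim_top : Tendsto d atTop atTop

noncomputable def rho2 {X : Type*} (ρ : X → X → ℝ) {d : ℕ} (φ ψ : Fin d → X) : ℝ :=
  Real.sqrt ((1 / (d : ℝ)) * ∑ a, (ρ (φ a) (ψ a)) ^ 2)

noncomputable def rhoInf {X : Type*} (ρ : X → X → ℝ) {d : ℕ} (φ ψ : Fin d → X) : ℝ :=
  ⨆ a : Fin d, ρ (φ a) (ψ a)

def MapSet {G X : Type*} [Group G] (α : G → X → X) (ρ : X → X → ℝ)
    (F : Finset G) (δ : ℝ) {d : ℕ} (σ : G → Equiv.Perm (Fin d)) : Set (Fin d → X) :=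
  {φ | ∀ s ∈ F, rho2 ρ (fun a => α s (φ a)) (fun a => φ (σ s a)) < δ}

noncomputable def Mval {G X : Type*} [Group G] (α : G → X → X) (f : X → ℝ) (ρ : X → X → ℝ)
    (ε : ℝ) (F : Finset G) (δ : ℝ) {d : ℕ} (σ : G → Equiv.Perm (Fin d))
    (sepd : (Fin d → X) → (Fin d → X) → ℝ) : ℝ :=
  sSup {r : ℝ | ∃ E : Finset (Fin d → X), ↑E ⊆ MapSet α ρ F δ σ ∧
    (∀ φ ∈ E, ∀ ψ ∈ E, φ ≠ ψ → ε ≤ sepd φ ψ) ∧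
    r = ∑ φ ∈ E, Real.exp (∑ a, f (φ a))}

noncomputable def PressureInf {G X : Type*} [Group G] (α : G → X → X) (f : X → ℝ)
    (ρ : X → X → ℝ) (d : ℕ → ℕ) (σ : ∀ i, G → Equiv.Perm (Fin (d i))) : EReal :=
  ⨆ (ε : ℝ) (_ : 0 < ε), ⨅ (F : Finset G) (_ : F.Nonempty), ⨅ (δ : ℝ) (_ : 0 < δ),
    Filter.limsup (fun i =>
      if (MapSet α ρ F δ (σ i)).Nonempty then
        (((Real.log (Mval α f ρ ε F δ (σ i) (rhoInf ρ))) / (d i : ℝ) : ℝ) : EReal)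
      else (⊥ : EReal)) atTop

noncomputable def Pressure2 {G X : Type*} [Group G] (α : G → X → X) (f : X → ℝ)
    (ρ : X → X → ℝ) (d : ℕ → ℕ) (σ : ∀ i, G → Equiv.Perm (Fin (d i))) : EReal :=
  ⨆ (ε : ℝ) (_ : 0 < ε), ⨅ (F : Finset G) (_ : F.Nonempty), ⨅ (δ : ℝ) (_ : 0 < δ),
    Filter.limsup (fun i =>
      if (MapSet α ρ F δ (σ i)).Nonempty then
        (((Real.log (Mval α f ρ ε F δ (σ i) (rho2 ρ))) / (d i : ℝ) : ℝ) : EReal)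
      else (⊥ : EReal)) atTop

def MapMuSet {G X : Type*} [Group G] [TopologicalSpace X] [MeasurableSpace X]
    (α : G → X → X) (μ : Measure X) (ρ : X → X → ℝ) (F : Finset G)
    (L : Finset C(X, ℝ)) (δ : ℝ) {d : ℕ} (σ : G → Equiv.Perm (Fin d)) : Set (Fin d → X) :=
  {φ | φ ∈ MapSet α ρ F δ σ ∧
    ∀ g ∈ L, |(1 / (d : ℝ)) * ∑ j, g (φ j) - ∫ x, g x ∂μ| < δ}

noncomputable def Nval {X : Type*} (ε : ℝ) {d : ℕ} (Y : Set (Fin d → X))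
    (sepd : (Fin d → X) → (Fin d → X) → ℝ) : ℝ :=
  sSup {r : ℝ | ∃ E : Finset (Fin d → X), ↑E ⊆ Y ∧
    (∀ φ ∈ E, ∀ ψ ∈ E, φ ≠ ψ → ε ≤ sepd φ ψ) ∧ r = (E.card : ℝ)}

noncomputable def MeasEntropy {G X : Type*} [Group G] [TopologicalSpace X] [MeasurableSpace X]
    (α : G → X → X) (μ : Measure X) (ρ : X → X → ℝ) (d : ℕ → ℕ)
    (σ : ∀ i, G → Equiv.Perm (Fin (d i))) : EReal :=
  ⨆ (ε : ℝ) (_ : 0 < ε), ⨅ (F : Finset G) (_ : F.Nonempty),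
    ⨅ (L : Finset C(X, ℝ)) (_ : L.Nonempty), ⨅ (δ : ℝ) (_ : 0 < δ),
      Filter.limsup (fun i =>
        if (MapMuSet α μ ρ F L δ (σ i)).Nonempty then
          (((Real.log (Nval ε (MapMuSet α μ ρ F L δ (σ i)) (rhoInf ρ))) / (d i : ℝ) : ℝ) : EReal)
        else (⊥ : EReal)) atTop

def IsInvProb {G X : Type*} [Group G] [MeasurableSpace X]
    (α : G → X → X) (μ : Measure X) : Prop :=
  IsProbabilityMeasure μ ∧ ∀ s : G, Measure.map (α s) μ = μ

noncomputable def Kval {G X : Type*} [Group G] (α : G → X → X) (f : X → ℝ)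
    (ρ : X → X → ℝ) (ε : ℝ) (F : Finset G) : ℝ :=
  sSup {r : ℝ | ∃ D : Finset X,
    (∀ x ∈ D, ∀ y ∈ D, x ≠ y → ε ≤ ⨆ s ∈ F, ρ (α s x) (α s y)) ∧
    r = ∑ x ∈ D, Real.exp (∑ s ∈ F, f (α s x))}

def IsFolnerSeq (G : Type*) [Group G] [DecidableEq G] (Fol : ℕ → Finset G) : Prop :=
  (∀ n, (Fol n).Nonempty) ∧ ∀ s : G,
    Tendsto (fun n =>
      (((((Fol n).image fun t => s * t) \ Fol n) ∪ (Fol n \ ((Fol n).image fun t => s * t))).card : ℝ)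
        / ((Fol n).card : ℝ)) atTop (nhds 0)


section Aux

variable {X : Type*} [TopologicalSpace X] {ρ : X → X → ℝ}

private lemma ball_open (hρ : IsContPseudoMetric X ρ) (x : X) (r : ℝ) :
    IsOpen {y | ρ x y < r} := by
  have hc : Continuous fun y => ρ x y :=
    hρ.cont.comp (Continuous.prodMk continuous_const continuous_id)
  exact isOpen_lt hc continuous_const

private lemma exists_net [CompactSpace X] (hρ : IsContPseudoMetric X ρ) {r : ℝ} (hr : 0 < r) :
    ∃ T : Finset X, ∀ x : X, ∃ c ∈ T, ρ c x < r := by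
  obtain ⟨T, hT⟩ := isCompact_univ.elim_finite_subcover (fun x : X => {y | ρ x y < r})
    (fun x => ball_open hρ x r) (fun x _ => Set.mem_iUnion.2 ⟨x, by simp [hρ.refl, hr]⟩)
  refine ⟨T, fun x => ?_⟩
  have hx := hT (Set.mem_univ x)
  simpa using hx

private lemma card_le_of_sep (hρ : IsContPseudoMetric X ρ) {ε : ℝ} (hε : 0 < ε)
    {d : ℕ} {T : Finset X} (hT : ∀ x : X, ∃ c ∈ T, ρ c x < ε / 4)
    {E : Finset (Fin d → X)}
    (hsep : ∀ φ ∈ E, ∀ ψ ∈ E, φ ≠ ψ → ε ≤ rhoInf ρ φ ψ) :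
    E.card ≤ T.card ^ d := by
  classical
  choose c hcT hcρ using hT
  set g : (Fin d → X) → (Fin d → {x // x ∈ T}) := fun φ a => ⟨c (φ a), hcT _⟩ with hg
  have hinj : (↑E : Set (Fin d → X)).InjOn g := by
    intro φ hφ ψ hψ h
    by_contra hne
    have hsep' := hsep φ hφ ψ hψ hne
    rcases Nat.eq_zero_or_pos d with hd | hd
    · subst hd
      exact hne (funext fun a => a.elim0)
    · have hFin : Nonempty (Fin d) := ⟨⟨0, hd⟩⟩
      have hub : ∀ a : Fin d, ρ (φ a) (ψ a) ≤ ε / 2 := by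
        intro a
        have hcc : c (φ a) = c (ψ a) := congrArg Subtype.val (congrFun h a)
        have h1 : ρ (c (φ a)) (φ a) < ε / 4 := hcρ _
        have h2 : ρ (c (ψ a)) (ψ a) < ε / 4 := hcρ _
        have h3 : ρ (φ a) (ψ a) ≤ ρ (φ a) (c (φ a)) + ρ (c (φ a)) (ψ a) := hρ.triangle _ _ _
        rw [hρ.symm (φ a) (c (φ a)), hcc] at h3
        have h1' : ρ (c (ψ a)) (φ a) < ε / 4 := by rw [← hcc]; exact h1
        linarith
      have hle : rhoInf ρ φ ψ ≤ ε / 2 := ciSup_le hub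
      linarith
  have hcard := Finset.card_le_card_of_injOn g
      (fun φ _ => Finset.mem_univ _) hinj
  calc E.card ≤ (Finset.univ : Finset (Fin d → {x // x ∈ T})).card := hcard
    _ = T.card ^ d := by
        rw [Finset.card_univ, Fintype.card_fun, Fintype.card_coe, Fintype.card_fin]

private lemma bddAbove_gen [CompactSpace X] (hρ : IsContPseudoMetric X ρ) {ε : ℝ} (hε : 0 < ε)
    {d : ℕ} (Y : Set (Fin d → X)) (w : (Fin d → X) → ℝ) (B : ℝ) (hw : ∀ φ, w φ ≤ B)
    (hB : 0 ≤ B) :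
    BddAbove {r : ℝ | ∃ E : Finset (Fin d → X), ↑E ⊆ Y ∧
      (∀ φ ∈ E, ∀ ψ ∈ E, φ ≠ ψ → ε ≤ rhoInf ρ φ ψ) ∧ r = ∑ φ ∈ E, w φ} := by
  obtain ⟨T, hT⟩ := exists_net hρ (by positivity : (0:ℝ) < ε / 4)
  refine ⟨(T.card ^ d : ℝ) * B, ?_⟩
  rintro r ⟨E, -, hsep, rfl⟩
  have h2 : (E.card : ℝ) ≤ ((T.card ^ d : ℕ) : ℝ) :=
    Nat.cast_le.2 (card_le_of_sep hρ hε hT hsep)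
  calc ∑ φ ∈ E, w φ ≤ ∑ _φ ∈ E, B := Finset.sum_le_sum fun φ _ => hw φ
    _ = (E.card : ℝ) * B := by rw [Finset.sum_const, nsmul_eq_mul]
    _ ≤ (T.card ^ d : ℝ) * B := by
        have hc2 : ((T.card ^ d : ℕ) : ℝ) = (T.card : ℝ) ^ d := by push_cast; ring
        rw [← hc2]
        exact mul_le_mul_of_nonneg_right h2 hB

private lemma bddAbove_card [CompactSpace X] (hρ : IsContPseudoMetric X ρ) {ε : ℝ} (hε : 0 < ε)
    {d : ℕ} (Y : Set (Fin d → X)) :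
    BddAbove {r : ℝ | ∃ E : Finset (Fin d → X), ↑E ⊆ Y ∧
      (∀ φ ∈ E, ∀ ψ ∈ E, φ ≠ ψ → ε ≤ rhoInf ρ φ ψ) ∧ r = (E.card : ℝ)} := by
  obtain ⟨T, hT⟩ := exists_net hρ (by positivity : (0:ℝ) < ε / 4)
  refine ⟨(T.card ^ d : ℝ), ?_⟩
  rintro r ⟨E, -, hsep, rfl⟩
  exact_mod_cast card_le_of_sep hρ hε hT hsep

end Aux

private lemma add_le_of_forall_small {a b : EReal} {c δ : ℝ} (hδ : 0 < δ)
    (h : ∀ t : ℝ, 0 < t → t ≤ δ → a + ((c - t : ℝ) : EReal) ≤ b) :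
    a + (c : EReal) ≤ b := by
  induction a with
  | bot => rw [EReal.bot_add]; exact bot_le
  | top =>
      have h1 := h δ hδ le_rfl
      rw [EReal.top_add_coe] at h1 ⊢
      exact h1
  | coe a =>
      induction b with
      | bot =>
          have h1 := h δ hδ le_rfl
          rw [← EReal.coe_add] at h1
          exact absurd (le_bot_iff.1 h1) (EReal.coe_ne_bot _)
      | coe b =>
          rw [← EReal.coe_add, EReal.coe_le_coe_iff]
          by_contra hcon
          push_neg at hcon
          set t := min ((a + c - b) / 2) δ with ht
          have ht0 : 0 < t := lt_min (by linarith) hδ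
          have h1 := h t ht0 (min_le_right _ _)
          rw [← EReal.coe_add, EReal.coe_le_coe_iff] at h1
          have h2 : t ≤ (a + c - b) / 2 := min_le_left _ _
          linarith
      | top => exact le_top

private lemma key_ineq {G : Type*} [Group G] {X : Type*} [TopologicalSpace X] [CompactSpace X]
    [MeasurableSpace X] (α : G → X → X) (f : X → ℝ) (hf : Continuous f)
    (ρ : X → X → ℝ) (hρ : IsContPseudoMetric X ρ) (μ : Measure X)
    {ε δ₁ δ₂ : ℝ} (hε : 0 < ε) (h12 : δ₁ ≤ δ₂) (F : Finset G)
    {d : ℕ} (hd : 0 < d) (σ : G → Equiv.Perm (Fin d))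
    (hne : (MapMuSet α μ ρ F {ContinuousMap.mk f hf} δ₁ σ).Nonempty) :
    (MapSet α ρ F δ₂ σ).Nonempty ∧
    Real.log (Nval ε (MapMuSet α μ ρ F {ContinuousMap.mk f hf} δ₁ σ) (rhoInf ρ)) / (d : ℝ)
      + ((∫ x, f x ∂μ) - δ₁)
      ≤ Real.log (Mval α f ρ ε F δ₂ σ (rhoInf ρ)) / (d : ℝ) := by
  classical
  obtain ⟨φ0, hφ0⟩ := hne
  obtain ⟨C, hC⟩ := (isCompact_range hf).bddAbove
  have hC' : ∀ x, f x ≤ C := fun x => hC (Set.mem_range_self x)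
  have hd' : (0 : ℝ) < (d : ℝ) := by exact_mod_cast hd
  set Y := MapMuSet α μ ρ F {ContinuousMap.mk f hf} δ₁ σ with hYdef
  have hmono : Y ⊆ MapSet α ρ F δ₂ σ := by
    intro φ hφ s hs
    exact lt_of_lt_of_le (hφ.1 s hs) h12
  set c0 : ℝ := (∫ x, f x ∂μ) - δ₁ with hc0
  -- the defining sets
  set SN := {r : ℝ | ∃ E : Finset (Fin d → X), ↑E ⊆ Y ∧
      (∀ φ ∈ E, ∀ ψ ∈ E, φ ≠ ψ → ε ≤ rhoInf ρ φ ψ) ∧ r = (E.card : ℝ)} with hSN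
  set SM := {r : ℝ | ∃ E : Finset (Fin d → X), ↑E ⊆ MapSet α ρ F δ₂ σ ∧
      (∀ φ ∈ E, ∀ ψ ∈ E, φ ≠ ψ → ε ≤ rhoInf ρ φ ψ) ∧
      r = ∑ φ ∈ E, Real.exp (∑ a, f (φ a))} with hSM
  have hNval : Nval ε Y (rhoInf ρ) = sSup SN := rfl
  have hMval : Mval α f ρ ε F δ₂ σ (rhoInf ρ) = sSup SM := rfl
  have bddN : BddAbove SN := bddAbove_card hρ hε Y
  have bddM : BddAbove SM := by
    refine bddAbove_gen hρ hε (MapSet α ρ F δ₂ σ) _ (Real.exp ((d : ℝ) * C)) ?_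
      (Real.exp_nonneg _)
    intro φ
    refine Real.exp_le_exp.2 ?_
    calc ∑ a, f (φ a) ≤ ∑ _a : Fin d, C := Finset.sum_le_sum fun a _ => hC' _
      _ = (d : ℝ) * C := by
          rw [Finset.sum_const, Finset.card_univ, Fintype.card_fin, nsmul_eq_mul]
  -- each φ ∈ Y has a lower bound on the Birkhoff-type sum
  have hint : ∀ φ : Fin d → X, φ ∈ Y → (d : ℝ) * c0 ≤ ∑ a, f (φ a) := by
    intro φ hφ
    have h := hφ.2 (ContinuousMap.mk f hf) (Finset.mem_singleton_self _)
    simp only [ContinuousMap.coe_mk] at h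
    have h2 : (∫ x, f x ∂μ) - δ₁ < (1 / (d : ℝ)) * ∑ j, f (φ j) := by
      have habs := abs_lt.1 h
      linarith [habs.1]
    have h3 : (d : ℝ) * ((1 / (d : ℝ)) * ∑ j, f (φ j)) = ∑ j, f (φ j) := by
      field_simp
    calc (d : ℝ) * c0 ≤ (d : ℝ) * ((1 / (d : ℝ)) * ∑ j, f (φ j)) :=
          mul_le_mul_of_nonneg_left h2.le hd'.le
      _ = ∑ j, f (φ j) := h3
  have hK : (0 : ℝ) < Real.exp ((d : ℝ) * c0) := Real.exp_pos _
  -- Mval dominates card * exp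
  have hMge : ∀ E : Finset (Fin d → X), ↑E ⊆ Y →
      (∀ φ ∈ E, ∀ ψ ∈ E, φ ≠ ψ → ε ≤ rhoInf ρ φ ψ) →
      (E.card : ℝ) * Real.exp ((d : ℝ) * c0) ≤ sSup SM := by
    intro E hEY hEsep
    have hmem : (∑ φ ∈ E, Real.exp (∑ a, f (φ a))) ∈ SM :=
      ⟨E, fun φ hφ => hmono (hEY hφ), hEsep, rfl⟩
    have hle : (E.card : ℝ) * Real.exp ((d : ℝ) * c0) ≤ ∑ φ ∈ E, Real.exp (∑ a, f (φ a)) := by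
      calc (E.card : ℝ) * Real.exp ((d : ℝ) * c0)
          = ∑ _φ ∈ E, Real.exp ((d : ℝ) * c0) := by rw [Finset.sum_const, nsmul_eq_mul]
        _ ≤ ∑ φ ∈ E, Real.exp (∑ a, f (φ a)) :=
            Finset.sum_le_sum fun φ hφ => Real.exp_le_exp.2 (hint φ (hEY hφ))
    exact hle.trans (le_csSup bddM hmem)
  have hSNne : SN.Nonempty := ⟨0, ∅, by simp, by simp, by simp⟩
  have hN1 : (1 : ℝ) ≤ sSup SN := by
    refine le_csSup bddN ⟨{φ0}, ?_, ?_, by simp⟩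
    · intro ψ hψ
      have : ψ = φ0 := by simpa using hψ
      rw [this]; exact hφ0
    · intro φ hφ ψ hψ hne'
      rw [Finset.mem_singleton] at hφ hψ
      exact absurd (hφ.trans hψ.symm) hne'
  have hNM : sSup SN * Real.exp ((d : ℝ) * c0) ≤ sSup SM := by
    rw [← le_div_iff₀ hK]
    refine csSup_le hSNne ?_
    rintro r ⟨E, hEY, hEsep, rfl⟩
    rw [le_div_iff₀ hK]
    exact hMge E hEY hEsep
  have hNpos : (0 : ℝ) < sSup SN := lt_of_lt_of_le one_pos hN1
  have hMpos : (0 : ℝ) < sSup SM := by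
    calc (0 : ℝ) < sSup SN * Real.exp ((d : ℝ) * c0) := mul_pos hNpos hK
      _ ≤ sSup SM := hNM
  refine ⟨⟨φ0, hmono hφ0⟩, ?_⟩
  rw [hNval, hMval]
  have hlog : Real.log (sSup SN) + (d : ℝ) * c0 ≤ Real.log (sSup SM) := by
    have h1 := Real.log_le_log (mul_pos hNpos hK) hNM
    rwa [Real.log_mul (ne_of_gt hNpos) (ne_of_gt hK), Real.log_exp] at h1
  have h2 : (Real.log (sSup SN) + (d : ℝ) * c0) / (d : ℝ) ≤ Real.log (sSup SM) / (d : ℝ) := by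
    gcongr
  rwa [add_div, mul_div_cancel_left₀ _ (ne_of_gt hd')] at h2

theorem stmt2 {G : Type*} [Group G] [Countable G]
    {X : Type*} [TopologicalSpace X] [CompactSpace X] [TopologicalSpace.MetrizableSpace X]
    [MeasurableSpace X] [BorelSpace X]
    (α : G → X → X) (hα : ContAction G X α)
    (d : ℕ → ℕ) (σ : ∀ i, G → Equiv.Perm (Fin (d i))) (hσ : IsSoficApprox G d σ)
    (f : X → ℝ) (hf : Continuous f)
    (ρ : X → X → ℝ) (hρ : IsCompatMetric X ρ)
    (μ : Measure X) (hμ : IsInvProb α μ) :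
    MeasEntropy α μ ρ d σ + (((∫ x, f x ∂μ) : ℝ) : EReal) ≤ PressureInf α f ρ d σ := by
  classical
  unfold MeasEntropy PressureInf
  rw [← EReal.le_sub_iff_add_le (Or.inl (EReal.coe_ne_bot _)) (Or.inl (EReal.coe_ne_top _))]
  refine iSup₂_le fun ε hε => ?_
  rw [EReal.le_sub_iff_add_le (Or.inl (EReal.coe_ne_bot _)) (Or.inl (EReal.coe_ne_top _))]
  refine le_trans ?_ (le_iSup₂ ε hε)
  refine le_iInf fun F => le_iInf fun hF => le_iInf fun δ => le_iInf fun hδ => ?_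
  refine add_le_of_forall_small hδ fun t ht htδ => ?_
  -- bound the inf by the term at (F, {f}, t)
  have h1 : (⨅ (F : Finset G) (_ : F.Nonempty),
      ⨅ (L : Finset C(X, ℝ)) (_ : L.Nonempty), ⨅ (δ' : ℝ) (_ : 0 < δ'),
        Filter.limsup (fun i =>
          if (MapMuSet α μ ρ F L δ' (σ i)).Nonempty then
            (((Real.log (Nval ε (MapMuSet α μ ρ F L δ' (σ i)) (rhoInf ρ))) / (d i : ℝ) : ℝ) : EReal)
          else (⊥ : EReal)) atTop)
      ≤ Filter.limsup (fun i =>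
          if (MapMuSet α μ ρ F {ContinuousMap.mk f hf} t (σ i)).Nonempty then
            (((Real.log (Nval ε (MapMuSet α μ ρ F {ContinuousMap.mk f hf} t (σ i)) (rhoInf ρ))) / (d i : ℝ) : ℝ) : EReal)
          else (⊥ : EReal)) atTop := by
    refine iInf₂_le_of_le F hF ?_
    refine iInf₂_le_of_le {ContinuousMap.mk f hf} (Finset.singleton_nonempty _) ?_
    exact iInf₂_le t ht
  refine le_trans (add_le_add h1 le_rfl) ?_
  set u : ℕ → EReal := fun i =>
    if (MapMuSet α μ ρ F {ContinuousMap.mk f hf} t (σ i)).Nonempty then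
      (((Real.log (Nval ε (MapMuSet α μ ρ F {ContinuousMap.mk f hf} t (σ i)) (rhoInf ρ))) / (d i : ℝ) : ℝ) : EReal)
    else (⊥ : EReal) with hu
  set w : ℕ → EReal := fun i =>
    if (MapSet α ρ F δ (σ i)).Nonempty then
      (((Real.log (Mval α f ρ ε F δ (σ i) (rhoInf ρ))) / (d i : ℝ) : ℝ) : EReal)
    else (⊥ : EReal) with hw
  have hev : (u + fun _ => (((∫ x, f x ∂μ) - t : ℝ) : EReal)) ≤ᶠ[atTop] w := by
    filter_upwards [hσ.dim_top.eventually_ge_atTop 1] with i hdi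
    have hdpos : 0 < d i := hdi
    show u i + (((∫ x, f x ∂μ) - t : ℝ) : EReal) ≤ w i
    by_cases hne : (MapMuSet α μ ρ F {ContinuousMap.mk f hf} t (σ i)).Nonempty
    · obtain ⟨hMap, hkey⟩ := key_ineq α f hf ρ hρ.toIsContPseudoMetric μ hε htδ F hdpos
        (σ i) hne
      rw [hu, hw]
      simp only [if_pos hne, if_pos hMap]
      rw [← EReal.coe_add, EReal.coe_le_coe_iff]
      exact hkey
    · rw [hu]
      simp only [if_neg hne]
      rw [EReal.bot_add]
      exact bot_le
  calc Filter.limsup u atTop + (((∫ x, f x ∂μ) - t : ℝ) : EReal)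
      = Filter.limsup u atTop
          + Filter.liminf (fun _ : ℕ => (((∫ x, f x ∂μ) - t : ℝ) : EReal)) atTop := by
        rw [Filter.liminf_const]
    _ ≤ Filter.limsup (u + fun _ : ℕ => (((∫ x, f x ∂μ) - t : ℝ) : EReal)) atTop :=
        EReal.le_limsup_add
    _ ≤ Filter.limsup w atTop := Filter.limsup_le_limsup hev

end Sofic
end

section
/- Let α be a continuous action of a countable sofic group G on a compact metrizable space X with sofic approximation sequence Σ, and let f : X → ℝ be continuous. Then for any two compatible metrics ρ and ρ' on X (metrics inducing the topology of X), P_{Σ,∞}(f,X,G,ρ) = P_{Σ,∞}(f,X,G,ρ'). -/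
open Filter MeasureTheory
open scoped Pointwise Classical BigOperators

namespace Sofic

lemma unif {X : Type*} [TopologicalSpace X] [CompactSpace X]
    {ρ ρ' : X → X → ℝ} (hρ : IsCompatMetric X ρ) (hρ' : IsCompatMetric X ρ')
    {ε : ℝ} (hε : 0 < ε) : ∃ η > 0, ∀ x y, ρ' x y < η → ρ x y < ε := by
  set K : Set (X × X) := {p | ε ≤ ρ p.1 p.2} with hK
  have hKc : IsClosed K := isClosed_le continuous_const hρ.cont
  rcases K.eq_empty_or_nonempty with hKe | hKne
  · refine ⟨1, one_pos, fun x y _ => ?_⟩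
    by_contra h
    have hmem : (x, y) ∈ K := not_lt.1 h
    rw [hKe] at hmem
    exact hmem
  · obtain ⟨p, hpK, hpmin⟩ :=
      hKc.isCompact.exists_isMinOn hKne hρ'.cont.continuousOn
    have hp1 : p.1 ≠ p.2 := by
      intro h
      have h0 : ρ p.1 p.2 = 0 := by rw [h]; exact hρ.refl p.2
      have h1 : ε ≤ ρ p.1 p.2 := hpK
      rw [h0] at h1
      linarith
    have hηpos : 0 < ρ' p.1 p.2 :=
      lt_of_le_of_ne (hρ'.nonneg _ _) (fun h => hp1 (hρ'.eq_of_zero _ _ h.symm))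
    refine ⟨ρ' p.1 p.2, hηpos, fun x y h => ?_⟩
    by_contra hc
    have hxy : (x, y) ∈ K := Set.mem_setOf.2 (not_lt.1 hc)
    exact absurd (hpmin hxy) (not_le.2 h)

lemma sep_transfer {X : Type*} {ρ ρ' : X → X → ℝ} {ε η : ℝ} (hε : 0 < ε) (hη : 0 < η)
    (himp : ∀ x y, ρ' x y < η → ρ x y < ε) {d : ℕ} {φ ψ : Fin d → X}
    (h : ε ≤ rhoInf ρ φ ψ) : η ≤ rhoInf ρ' φ ψ := by
  rcases Nat.eq_zero_or_pos d with hd | hd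
  · subst hd
    rw [rhoInf, iSup_of_empty', Real.sSup_empty] at h
    linarith
  · haveI : Nonempty (Fin d) := Fin.pos_iff_nonempty.1 hd
    obtain ⟨a0, ha0⟩ := Finite.exists_max fun a => ρ (φ a) (ψ a)
    have h1 : rhoInf ρ φ ψ ≤ ρ (φ a0) (ψ a0) := ciSup_le ha0
    have h2 : ε ≤ ρ (φ a0) (ψ a0) := le_trans h h1
    have h3 : η ≤ ρ' (φ a0) (ψ a0) := by
      by_contra hc
      exact absurd h2 (not_le.2 (himp _ _ (not_le.1 hc)))
    rw [rhoInf]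
    exact le_trans h3 (le_ciSup (Set.Finite.bddAbove
      (Set.finite_range fun a => ρ' (φ a) (ψ a))) a0)

lemma rho2_lt {X : Type*} {ρ ρ' : X → X → ℝ} (hρ'nn : ∀ x y, 0 ≤ ρ' x y)
    {M : ℝ} (hM : 0 < M) (hρ'M : ∀ x y, ρ' x y ≤ M)
    {η θ : ℝ} (hη : 0 < η) (hθ : 0 < θ) (himp : ∀ x y, ρ x y < η → ρ' x y < θ)
    {d : ℕ} {φ ψ : Fin d → X} (h : rho2 ρ φ ψ < η * θ / M) :
    rho2 ρ' φ ψ < θ * Real.sqrt 2 := by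
  have hθ2 : 0 < θ * Real.sqrt 2 := by positivity
  rcases Nat.eq_zero_or_pos d with hd | hd
  · subst hd
    rw [rho2]
    simp [hθ2]
  have hdpos : (0 : ℝ) < (d : ℝ) := by exact_mod_cast hd
  have hδ : (0:ℝ) < η * θ / M := by positivity
  have hsum : (1 / (d : ℝ)) * ∑ a, (ρ (φ a) (ψ a)) ^ 2 < (η * θ / M) ^ 2 :=
    (Real.sqrt_lt' hδ).1 h
  have hpt : ∀ a : Fin d, (ρ' (φ a) (ψ a)) ^ 2 ≤ θ ^ 2 + (M / η) ^ 2 * (ρ (φ a) (ψ a)) ^ 2 := by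
    intro a
    by_cases hc : ρ (φ a) (ψ a) < η
    · have h1 : ρ' (φ a) (ψ a) < θ := himp _ _ hc
      nlinarith [hρ'nn (φ a) (ψ a), sq_nonneg (ρ (φ a) (ψ a)), sq_nonneg (M / η)]
    · push_neg at hc
      have h1 : ρ' (φ a) (ψ a) ≤ M := hρ'M _ _
      have h2 : M ^ 2 ≤ (M / η) ^ 2 * (ρ (φ a) (ψ a)) ^ 2 := by
        have hle : M ≤ (M / η) * ρ (φ a) (ψ a) := by
          have := mul_le_mul_of_nonneg_left hc (le_of_lt (div_pos hM hη))
          rwa [mul_comm (M / η) η, mul_div_cancel₀ M (ne_of_gt hη)] at this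
        calc M ^ 2 ≤ ((M / η) * ρ (φ a) (ψ a)) ^ 2 := pow_le_pow_left₀ hM.le hle 2
          _ = (M / η) ^ 2 * (ρ (φ a) (ψ a)) ^ 2 := by ring
      nlinarith [hρ'nn (φ a) (ψ a)]
  have hsum' : ∑ a, (ρ' (φ a) (ψ a)) ^ 2 ≤
      (d : ℝ) * θ ^ 2 + (M / η) ^ 2 * ∑ a, (ρ (φ a) (ψ a)) ^ 2 := by
    calc ∑ a, (ρ' (φ a) (ψ a)) ^ 2
        ≤ ∑ a : Fin d, (θ ^ 2 + (M / η) ^ 2 * (ρ (φ a) (ψ a)) ^ 2) :=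
          Finset.sum_le_sum fun a _ => hpt a
      _ = (d : ℝ) * θ ^ 2 + (M / η) ^ 2 * ∑ a, (ρ (φ a) (ψ a)) ^ 2 := by
          rw [Finset.sum_add_distrib, Finset.sum_const, ← Finset.mul_sum]
          simp [mul_comm]
  have key : (1 / (d : ℝ)) * ∑ a, (ρ' (φ a) (ψ a)) ^ 2 < (θ * Real.sqrt 2) ^ 2 := by
    have h2 : (1 / (d : ℝ)) * ∑ a, (ρ' (φ a) (ψ a)) ^ 2 ≤
        θ ^ 2 + (M / η) ^ 2 * ((1 / (d : ℝ)) * ∑ a, (ρ (φ a) (ψ a)) ^ 2) := by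
      have := mul_le_mul_of_nonneg_left hsum' (le_of_lt (one_div_pos.2 hdpos))
      calc (1 / (d : ℝ)) * ∑ a, (ρ' (φ a) (ψ a)) ^ 2
          ≤ (1 / (d : ℝ)) * ((d : ℝ) * θ ^ 2 + (M / η) ^ 2 * ∑ a, (ρ (φ a) (ψ a)) ^ 2) := this
        _ = θ ^ 2 + (M / η) ^ 2 * ((1 / (d : ℝ)) * ∑ a, (ρ (φ a) (ψ a)) ^ 2) := by
            field_simp
    have h3 : (M / η) ^ 2 * ((1 / (d : ℝ)) * ∑ a, (ρ (φ a) (ψ a)) ^ 2) <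
        (M / η) ^ 2 * (η * θ / M) ^ 2 :=
      mul_lt_mul_of_pos_left hsum (by positivity)
    have h4 : (M / η) ^ 2 * (η * θ / M) ^ 2 = θ ^ 2 := by
      field_simp
    have h5 : (θ * Real.sqrt 2) ^ 2 = θ ^ 2 * 2 := by
      rw [mul_pow, Real.sq_sqrt (by norm_num : (2:ℝ) ≥ 0)]
    nlinarith
  rw [rho2]
  exact (Real.sqrt_lt' hθ2).2 key


-- bound on sums over separated families
lemma sep_sum_bdd {X : Type*} [TopologicalSpace X] [CompactSpace X]
    {ρ' : X → X → ℝ} (hρ' : IsContPseudoMetric X ρ') {f : X → ℝ} (hf : Continuous f)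
    {ε' : ℝ} (hε' : 0 < ε') (d : ℕ) :
    ∃ B : ℝ, ∀ E : Finset (Fin d → X),
      (∀ φ ∈ E, ∀ ψ ∈ E, φ ≠ ψ → ε' ≤ rhoInf ρ' φ ψ) →
      ∑ φ ∈ E, Real.exp (∑ a, f (φ a)) ≤ B := by
  obtain ⟨C, hC⟩ := (isCompact_range hf).bddAbove
  have hCb : ∀ x, f x ≤ C := fun x => hC ⟨x, rfl⟩
  -- finite cover by ε'/2-balls
  have hopen : ∀ x : X, IsOpen {y | ρ' x y < ε' / 2} := by
    intro x
    have : Continuous fun y => ρ' x y :=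
      hρ'.cont.comp (Continuous.prodMk continuous_const continuous_id)
    exact isOpen_lt this continuous_const
  obtain ⟨t, ht⟩ := isCompact_univ.elim_finite_subcover
    (fun x : X => {y | ρ' x y < ε' / 2}) hopen
    (fun x _ => Set.mem_iUnion.2 ⟨x, by simp [hρ'.refl]; positivity⟩)
  have hcov : ∀ y : X, ∃ x ∈ t, ρ' x y < ε' / 2 := by
    intro y
    have := ht (Set.mem_univ y)
    simpa using this
  choose c hc1 hc2 using hcov
  refine ⟨(t.card ^ d : ℕ) * Real.exp (d * C), fun E hsep => ?_⟩
  -- cardinality bound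
  have hcard : E.card ≤ t.card ^ d := by
    have hinj : Set.InjOn (fun φ : Fin d → X => fun a => c (φ a)) ↑E := by
      intro φ hφ ψ hψ hcode
      by_contra hne
      have hsepφψ := hsep φ hφ ψ hψ hne
      rcases Nat.eq_zero_or_pos d with hd | hd
      · exact hne (funext fun a => by subst hd; exact a.elim0)
      · haveI : Nonempty (Fin d) := Fin.pos_iff_nonempty.1 hd
        have hlt : ∀ a : Fin d, ρ' (φ a) (ψ a) < ε' := by
          intro a
          have hca : c (φ a) = c (ψ a) := congrFun hcode a
          have h1 : ρ' (φ a) (ψ a) ≤ ρ' (φ a) (c (φ a)) + ρ' (c (φ a)) (ψ a) :=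
            hρ'.triangle _ _ _
          have h2 : ρ' (φ a) (c (φ a)) = ρ' (c (φ a)) (φ a) := hρ'.symm _ _
          have h3 := hc2 (φ a)
          have h4 := hc2 (ψ a)
          rw [hca] at h1
          rw [hρ'.symm (φ a) (c (ψ a))] at h1
          calc ρ' (φ a) (ψ a) ≤ ρ' (c (ψ a)) (φ a) + ρ' (c (ψ a)) (ψ a) := h1
            _ < ε' := by rw [← hca] at *; linarith
        obtain ⟨a0, ha0⟩ := Finite.exists_max fun a => ρ' (φ a) (ψ a)
        have : rhoInf ρ' φ ψ ≤ ρ' (φ a0) (ψ a0) := ciSup_le ha0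
        linarith [hlt a0]
    have hmaps : ∀ φ ∈ E, (fun a => c (φ a)) ∈ Fintype.piFinset (fun _ : Fin d => t) := by
      intro φ _
      simp only [Fintype.mem_piFinset]
      exact fun a => hc1 (φ a)
    calc E.card ≤ (Fintype.piFinset (fun _ : Fin d => t)).card :=
          Finset.card_le_card_of_injOn _ hmaps hinj
      _ = t.card ^ d := by simp [Fintype.card_piFinset]
  -- sum bound
  have hterm : ∀ φ : Fin d → X, Real.exp (∑ a, f (φ a)) ≤ Real.exp (d * C) := by
    intro φ
    apply Real.exp_le_exp.2
    calc ∑ a, f (φ a) ≤ ∑ _a : Fin d, C := Finset.sum_le_sum fun a _ => hCb (φ a)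
      _ = d * C := by simp [mul_comm]
  calc ∑ φ ∈ E, Real.exp (∑ a, f (φ a)) ≤ ∑ _φ ∈ E, Real.exp (d * C) :=
        Finset.sum_le_sum fun φ _ => hterm φ
    _ = E.card * Real.exp (d * C) := by rw [Finset.sum_const]; simp [nsmul_eq_mul]
    _ ≤ (t.card ^ d : ℕ) * Real.exp (d * C) := by
        apply mul_le_mul_of_nonneg_right _ (Real.exp_nonneg _)
        exact_mod_cast hcard


lemma mval_bddAbove {G X : Type*} [Group G] [TopologicalSpace X] [CompactSpace X]
    (α : G → X → X) {f : X → ℝ} (hf : Continuous f) (ρ₀ : X → X → ℝ)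
    {ρs : X → X → ℝ} (hρs : IsContPseudoMetric X ρs) {ε : ℝ} (hε : 0 < ε)
    (F : Finset G) (δ : ℝ) {d : ℕ} (σ : G → Equiv.Perm (Fin d)) :
    BddAbove {r : ℝ | ∃ E : Finset (Fin d → X), ↑E ⊆ MapSet α ρ₀ F δ σ ∧
      (∀ φ ∈ E, ∀ ψ ∈ E, φ ≠ ψ → ε ≤ rhoInf ρs φ ψ) ∧
      r = ∑ φ ∈ E, Real.exp (∑ a, f (φ a))} := by
  obtain ⟨B, hB⟩ := sep_sum_bdd hρs hf hε d
  exact ⟨B, fun r hr => by obtain ⟨E, _, hsep, rfl⟩ := hr; exact hB E hsep⟩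

lemma mval_pos {G X : Type*} [Group G] [TopologicalSpace X] [CompactSpace X]
    (α : G → X → X) {f : X → ℝ} (hf : Continuous f) {ρ₀ : X → X → ℝ}
    {ρs : X → X → ℝ} (hρs : IsContPseudoMetric X ρs) {ε : ℝ} (hε : 0 < ε)
    (F : Finset G) (δ : ℝ) {d : ℕ} (σ : G → Equiv.Perm (Fin d))
    {φ0 : Fin d → X} (hφ0 : φ0 ∈ MapSet α ρ₀ F δ σ) :
    0 < Mval α f ρ₀ ε F δ σ (rhoInf ρs) := by
  have hmem : Real.exp (∑ a, f (φ0 a)) ∈ {r : ℝ | ∃ E : Finset (Fin d → X),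
      ↑E ⊆ MapSet α ρ₀ F δ σ ∧ (∀ φ ∈ E, ∀ ψ ∈ E, φ ≠ ψ → ε ≤ rhoInf ρs φ ψ) ∧
      r = ∑ φ ∈ E, Real.exp (∑ a, f (φ a))} := by
    refine ⟨{φ0}, by simpa using hφ0, ?_, by simp⟩
    intro φ hφ ψ hψ hne
    simp only [Finset.mem_singleton] at hφ hψ
    exact absurd (hφ.trans hψ.symm) hne
  have hbdd := mval_bddAbove α hf ρ₀ hρs hε F δ σ
  exact lt_of_lt_of_le (Real.exp_pos _) (le_csSup hbdd hmem)

lemma mval_le {G X : Type*} [Group G] [TopologicalSpace X] [CompactSpace X]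
    (α : G → X → X) {f : X → ℝ} (hf : Continuous f) {ρ₀ ρ₀' : X → X → ℝ}
    {ρs ρs' : X → X → ℝ} (hρs' : IsContPseudoMetric X ρs') {ε ε' : ℝ} (hε' : 0 < ε')
    (F : Finset G) (δ δ' : ℝ) {d : ℕ} (σ : G → Equiv.Perm (Fin d))
    (hsub : MapSet α ρ₀ F δ σ ⊆ MapSet α ρ₀' F δ' σ)
    (hseptr : ∀ φ ψ : Fin d → X, ε ≤ rhoInf ρs φ ψ → ε' ≤ rhoInf ρs' φ ψ) :
    Mval α f ρ₀ ε F δ σ (rhoInf ρs) ≤ Mval α f ρ₀' ε' F δ' σ (rhoInf ρs') := by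
  apply csSup_le_csSup (mval_bddAbove α hf ρ₀' hρs' hε' F δ' σ)
  · exact ⟨0, ∅, by simp, by simp, by simp⟩
  · rintro r ⟨E, hE1, hE2, rfl⟩
    exact ⟨E, hE1.trans hsub, fun φ hφ ψ hψ hne => hseptr φ ψ (hE2 φ hφ ψ hψ hne), rfl⟩

lemma pressureInf_le {G : Type*} [Group G]
    {X : Type*} [TopologicalSpace X] [CompactSpace X]
    (α : G → X → X) (d : ℕ → ℕ) (σ : ∀ i, G → Equiv.Perm (Fin (d i)))
    {f : X → ℝ} (hf : Continuous f)
    {ρ ρ' : X → X → ℝ} (hρ : IsCompatMetric X ρ) (hρ' : IsCompatMetric X ρ') :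
    PressureInf α f ρ d σ ≤ PressureInf α f ρ' d σ := by
  refine iSup₂_le fun ε hε => ?_
  obtain ⟨η, hη, himpsep⟩ := unif hρ hρ' hε
  refine le_iSup₂_of_le η hη ?_
  refine le_iInf₂ fun F hF => le_iInf₂ fun δ' hδ' => ?_
  obtain ⟨M0, hM0⟩ := (isCompact_range hρ'.cont).bddAbove
  set M : ℝ := max M0 1 with hMdef
  have hM : 0 < M := lt_of_lt_of_le one_pos (le_max_right _ _)
  have hρ'M : ∀ x y, ρ' x y ≤ M := fun x y =>
    le_trans (hM0 ⟨(x, y), rfl⟩) (le_max_left _ _)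
  obtain ⟨η2, hη2, himp2⟩ := unif hρ' hρ (half_pos hδ')
  set δ : ℝ := η2 * (δ' / 2) / M with hδdef
  have hδ : 0 < δ := by positivity
  refine iInf₂_le_of_le F hF (iInf₂_le_of_le δ hδ ?_)
  refine limsup_le_limsup (Eventually.of_forall fun i => ?_)
  by_cases hne : (MapSet α ρ F δ (σ i)).Nonempty
  · have hsub : MapSet α ρ F δ (σ i) ⊆ MapSet α ρ' F δ' (σ i) := by
      intro φ hφ s hs
      have h := hφ s hs
      have hlt := rho2_lt hρ'.nonneg hM hρ'M hη2 (half_pos hδ') himp2 h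
      refine lt_of_lt_of_le hlt ?_
      have h2 : Real.sqrt 2 ≤ 2 := by
        nlinarith [Real.sq_sqrt (by norm_num : (2:ℝ) ≥ 0),
          Real.sqrt_nonneg (2:ℝ)]
      nlinarith
    have hne' : (MapSet α ρ' F δ' (σ i)).Nonempty := hne.mono hsub
    simp only [if_pos hne, if_pos hne']
    obtain ⟨φ0, hφ0⟩ := hne
    have hMLpos : 0 < Mval α f ρ ε F δ (σ i) (rhoInf ρ) :=
      mval_pos α hf hρ.toIsContPseudoMetric hε F δ (σ i) hφ0
    have hseptr : ∀ φ ψ : Fin (d i) → X,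
        ε ≤ rhoInf ρ φ ψ → η ≤ rhoInf ρ' φ ψ :=
      fun φ ψ h => sep_transfer hε hη himpsep h
    have hle : Mval α f ρ ε F δ (σ i) (rhoInf ρ) ≤
        Mval α f ρ' η F δ' (σ i) (rhoInf ρ') :=
      mval_le α hf hρ'.toIsContPseudoMetric hη F δ δ' (σ i) hsub hseptr
    have hlog : Real.log (Mval α f ρ ε F δ (σ i) (rhoInf ρ)) ≤
        Real.log (Mval α f ρ' η F δ' (σ i) (rhoInf ρ')) :=
      Real.log_le_log hMLpos hle
    apply EReal.coe_le_coe_iff.2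
    rcases eq_or_ne ((d i : ℝ)) 0 with h0 | h0
    · simp [h0]
    · have hdi : (0:ℝ) < (d i : ℝ) :=
        lt_of_le_of_ne (Nat.cast_nonneg _) (Ne.symm h0)
      exact div_le_div_of_nonneg_right hlog hdi.le
  · simp only [if_neg hne]
    exact bot_le

theorem stmt7 {G : Type*} [Group G] [Countable G]
    {X : Type*} [TopologicalSpace X] [CompactSpace X] [TopologicalSpace.MetrizableSpace X]
    (α : G → X → X) (hα : ContAction G X α)
    (d : ℕ → ℕ) (σ : ∀ i, G → Equiv.Perm (Fin (d i))) (hσ : IsSoficApprox G d σ)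
    (f : X → ℝ) (hf : Continuous f)
    (ρ ρ' : X → X → ℝ) (hρ : IsCompatMetric X ρ) (hρ' : IsCompatMetric X ρ') :
    PressureInf α f ρ d σ = PressureInf α f ρ' d σ := by
  exact le_antisymm (pressureInf_le α d σ hf hρ hρ') (pressureInf_le α d σ hf hρ' hρ)

end Sofic
end

section
/- Let α be a continuous action of a countable sofic group G on a compact metrizable space X with sofic approximation sequence Σ, and suppose the sofic topological pressure P_Σ(·, X, G) takes finite values on C(X). Then P_Σ(·, X, G) is convex: for all continuous f, g : X → ℝ and all p ∈ [0,1], P_Σ(pf + (1−p)g, X, G) ≤ p·P_Σ(f, X, G) + (1−p)·P_Σ(g, X, G). -/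
open Filter MeasureTheory
open scoped Pointwise Classical BigOperators

namespace Sofic

lemma exists_sep_bound {X : Type*} [TopologicalSpace X] [CompactSpace X]
    (ρ : X → X → ℝ) (hρ : IsCompatMetric X ρ) {ε : ℝ} (hε : 0 < ε) :
    ∃ N : ℕ, 1 ≤ N ∧ ∀ (d : ℕ) (E : Finset (Fin d → X)),
      (∀ φ ∈ E, ∀ ψ ∈ E, φ ≠ ψ → ε ≤ rhoInf ρ φ ψ) → (E.card : ℝ) ≤ (N : ℝ) ^ d := by
  have hopen : ∀ x : X, IsOpen {y | ρ x y < ε / 4} := by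
    intro x
    have : Continuous fun y => ρ x y := hρ.cont.comp (Continuous.prodMk_right x)
    exact isOpen_lt this continuous_const
  obtain ⟨t, ht⟩ := isCompact_univ.elim_finite_subcover (fun x : X => {y | ρ x y < ε / 4})
    (fun x => hopen x) (by
      intro y _
      exact Set.mem_iUnion.2 ⟨y, by simp [hρ.refl y]; linarith⟩)
  refine ⟨t.card + 1, Nat.le_add_left 1 _, ?_⟩
  intro d E hsep
  have hc : ∀ y : X, ∃ x ∈ t, ρ x y < ε / 4 := by
    intro y
    have := ht (Set.mem_univ y)
    simpa using this
  choose c hct hcρ using hc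
  classical
  have hinj : Set.InjOn (fun φ : Fin d → X => fun a => (⟨c (φ a), hct (φ a)⟩ : {x // x ∈ t})) E := by
    intro φ hφ ψ hψ hEq
    by_contra hne
    have hsepv := hsep φ hφ ψ hψ hne
    have hbound : rhoInf ρ φ ψ ≤ ε / 2 := by
      apply Real.iSup_le _ (by positivity)
      intro a
      have h1 : c (φ a) = c (ψ a) := congrArg Subtype.val (congrFun hEq a)
      have h2 : ρ (φ a) (ψ a) ≤ ρ (φ a) (c (φ a)) + ρ (c (φ a)) (ψ a) := hρ.triangle _ _ _
      have h3 : ρ (φ a) (c (φ a)) = ρ (c (φ a)) (φ a) := hρ.symm _ _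
      have h4 := hcρ (φ a)
      have h5 := hcρ (ψ a)
      rw [← h1] at h5
      linarith
    linarith
  have card_le : E.card ≤ Fintype.card (Fin d → {x // x ∈ t}) := by
    classical
    have := Finset.card_le_card_of_injOn _ (fun x _ => Finset.mem_univ _) (by
      intro a ha b hb h
      exact hinj (by simpa using ha) (by simpa using hb) h)
    simpa using this
  have : Fintype.card (Fin d → {x // x ∈ t}) = t.card ^ d := by
    simp [Fintype.card_fun]
  calc (E.card : ℝ) ≤ (t.card ^ d : ℕ) := by exact_mod_cast this ▸ card_le
    _ ≤ ((t.card + 1 : ℕ) : ℝ) ^ d := by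
        push_cast
        exact pow_le_pow_left₀ (by positivity) (by linarith) d

section Mval
variable {G X : Type*} [Group G] (α : G → X → X) (f g : X → ℝ) (ρ : X → X → ℝ)
    (ε : ℝ) (F F' : Finset G) (δ δ' : ℝ) {d : ℕ} (σ : G → Equiv.Perm (Fin d))

/-- The set whose sSup is Mval. -/
def MvalSet : Set ℝ :=
  {r : ℝ | ∃ E : Finset (Fin d → X), ↑E ⊆ MapSet α ρ F δ σ ∧
    (∀ φ ∈ E, ∀ ψ ∈ E, φ ≠ ψ → ε ≤ rhoInf ρ φ ψ) ∧
    r = ∑ φ ∈ E, Real.exp (∑ a, f (φ a))}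

lemma Mval_eq : Mval α f ρ ε F δ σ (rhoInf ρ) = sSup (MvalSet α f ρ ε F δ σ) := rfl

lemma zero_mem_MvalSet : (0:ℝ) ∈ MvalSet α f ρ ε F δ σ :=
  ⟨∅, by simp, by simp, by simp⟩

lemma MvalSet_bddAbove {C : ℝ} (hC : ∀ x, f x ≤ C) {N : ℕ}
    (hN : ∀ E : Finset (Fin d → X),
      (∀ φ ∈ E, ∀ ψ ∈ E, φ ≠ ψ → ε ≤ rhoInf ρ φ ψ) → (E.card : ℝ) ≤ (N : ℝ) ^ d) :
    ∀ r ∈ MvalSet α f ρ ε F δ σ, r ≤ (N : ℝ) ^ d * Real.exp (d * C) := by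
  rintro r ⟨E, -, hsep, rfl⟩
  calc ∑ φ ∈ E, Real.exp (∑ a, f (φ a)) ≤ ∑ _φ ∈ E, Real.exp (d * C) := by
        apply Finset.sum_le_sum
        intro φ _
        apply Real.exp_le_exp.2
        calc ∑ a, f (φ a) ≤ ∑ _a : Fin d, C := Finset.sum_le_sum fun a _ => hC (φ a)
          _ = d * C := by simp [Finset.sum_const, mul_comm]
    _ = (E.card : ℝ) * Real.exp (d * C) := by simp [Finset.sum_const, mul_comm]
    _ ≤ (N : ℝ) ^ d * Real.exp (d * C) := by
        apply mul_le_mul_of_nonneg_right (hN E hsep) (Real.exp_nonneg _)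

lemma MvalSet_bdd' {C : ℝ} (hC : ∀ x, f x ≤ C) {N : ℕ}
    (hN : ∀ E : Finset (Fin d → X),
      (∀ φ ∈ E, ∀ ψ ∈ E, φ ≠ ψ → ε ≤ rhoInf ρ φ ψ) → (E.card : ℝ) ≤ (N : ℝ) ^ d) :
    BddAbove (MvalSet α f ρ ε F δ σ) :=
  ⟨_, fun r hr => MvalSet_bddAbove α f ρ ε F δ σ hC hN r hr⟩

lemma Mval_nonneg {C : ℝ} (hC : ∀ x, f x ≤ C) {N : ℕ}
    (hN : ∀ E : Finset (Fin d → X),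
      (∀ φ ∈ E, ∀ ψ ∈ E, φ ≠ ψ → ε ≤ rhoInf ρ φ ψ) → (E.card : ℝ) ≤ (N : ℝ) ^ d) :
    0 ≤ Mval α f ρ ε F δ σ (rhoInf ρ) :=
  le_csSup (MvalSet_bdd' α f ρ ε F δ σ hC hN) (zero_mem_MvalSet α f ρ ε F δ σ)

lemma Mval_pos {C : ℝ} (hC : ∀ x, f x ≤ C) {N : ℕ}
    (hN : ∀ E : Finset (Fin d → X),
      (∀ φ ∈ E, ∀ ψ ∈ E, φ ≠ ψ → ε ≤ rhoInf ρ φ ψ) → (E.card : ℝ) ≤ (N : ℝ) ^ d)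
    (hne : (MapSet α ρ F δ σ).Nonempty) :
    0 < Mval α f ρ ε F δ σ (rhoInf ρ) := by
  obtain ⟨φ, hφ⟩ := hne
  have hmem : Real.exp (∑ a, f (φ a)) ∈ MvalSet α f ρ ε F δ σ := by
    refine ⟨{φ}, by simpa using hφ, ?_, by simp⟩
    intro φ' hφ' ψ' hψ' hne'
    simp only [Finset.mem_singleton] at hφ' hψ'
    exact absurd (hφ'.trans hψ'.symm) hne'
  calc (0:ℝ) < Real.exp (∑ a, f (φ a)) := Real.exp_pos _
    _ ≤ _ := le_csSup (MvalSet_bdd' α f ρ ε F δ σ hC hN) hmem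

lemma Mval_mono {C : ℝ} (hC : ∀ x, f x ≤ C) {N : ℕ}
    (hN : ∀ E : Finset (Fin d → X),
      (∀ φ ∈ E, ∀ ψ ∈ E, φ ≠ ψ → ε ≤ rhoInf ρ φ ψ) → (E.card : ℝ) ≤ (N : ℝ) ^ d)
    (hsub : MapSet α ρ F δ σ ⊆ MapSet α ρ F' δ' σ) :
    Mval α f ρ ε F δ σ (rhoInf ρ) ≤ Mval α f ρ ε F' δ' σ (rhoInf ρ) := by
  apply csSup_le ⟨0, zero_mem_MvalSet α f ρ ε F δ σ⟩
  rintro r ⟨E, hE, hsep, rfl⟩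
  exact le_csSup (MvalSet_bdd' α f ρ ε F' δ' σ hC hN)
    ⟨E, fun x hx => hsub (hE hx), hsep, rfl⟩

set_option maxHeartbeats 1000000 in
lemma Mval_holder {p : ℝ} (hp : 0 < p) (hp1 : p < 1)
    {Cf Cg : ℝ} (hCf : ∀ x, f x ≤ Cf) (hCg : ∀ x, g x ≤ Cg) {N : ℕ}
    (hN : ∀ E : Finset (Fin d → X),
      (∀ φ ∈ E, ∀ ψ ∈ E, φ ≠ ψ → ε ≤ rhoInf ρ φ ψ) → (E.card : ℝ) ≤ (N : ℝ) ^ d) :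
    Mval α (fun x => p * f x + (1 - p) * g x) ρ ε F δ σ (rhoInf ρ) ≤
      (Mval α f ρ ε F δ σ (rhoInf ρ)) ^ p * (Mval α g ρ ε F δ σ (rhoInf ρ)) ^ (1 - p) := by
  have hq : 0 < 1 - p := by linarith
  rw [Mval_eq α (fun x => p * f x + (1 - p) * g x) ρ ε F δ σ]
  apply csSup_le ⟨0, zero_mem_MvalSet α (fun x => p * f x + (1 - p) * g x) ρ ε F δ σ⟩
  rintro r ⟨E, hE, hsep, rfl⟩
  have conj : Real.HolderConjugate (1 / p) (1 / (1 - p)) := by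
    rw [Real.holderConjugate_iff]; constructor
    · rw [lt_div_iff₀ hp]; linarith
    · rw [one_div, inv_inv, one_div, inv_inv]; ring
  have key := Real.inner_le_Lp_mul_Lq E (fun φ => Real.exp (∑ a, f (φ a)) ^ p)
    (fun φ => Real.exp (∑ a, g (φ a)) ^ (1 - p)) conj
  have lhs_eq : ∀ φ : Fin d → X, Real.exp (∑ a, (p * f (φ a) + (1 - p) * g (φ a))) =
      Real.exp (∑ a, f (φ a)) ^ p * Real.exp (∑ a, g (φ a)) ^ (1 - p) := by
    intro φ
    rw [Finset.sum_add_distrib, ← Finset.mul_sum, ← Finset.mul_sum, Real.exp_add,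
      mul_comm p _, mul_comm (1 - p) _, Real.exp_mul, Real.exp_mul]
  have rhs_f : (∑ φ ∈ E, |Real.exp (∑ a, f (φ a)) ^ p| ^ (1 / p)) ^ (1 / (1 / p)) =
      (∑ φ ∈ E, Real.exp (∑ a, f (φ a))) ^ p := by
    rw [one_div_one_div]
    congr 1
    apply Finset.sum_congr rfl
    intro φ _
    rw [abs_of_nonneg (Real.rpow_nonneg (Real.exp_nonneg _) _),
      ← Real.rpow_mul (Real.exp_nonneg _), mul_one_div_cancel hp.ne', Real.rpow_one]
  have rhs_g : (∑ φ ∈ E, |Real.exp (∑ a, g (φ a)) ^ (1 - p)| ^ (1 / (1 - p))) ^ (1 / (1 / (1 - p))) =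
      (∑ φ ∈ E, Real.exp (∑ a, g (φ a))) ^ (1 - p) := by
    rw [one_div_one_div]
    congr 1
    apply Finset.sum_congr rfl
    intro φ _
    rw [abs_of_nonneg (Real.rpow_nonneg (Real.exp_nonneg _) _),
      ← Real.rpow_mul (Real.exp_nonneg _), mul_one_div_cancel hq.ne', Real.rpow_one]
  rw [rhs_f, rhs_g] at key
  calc ∑ φ ∈ E, Real.exp (∑ a, (p * f (φ a) + (1 - p) * g (φ a)))
      = ∑ φ ∈ E, Real.exp (∑ a, f (φ a)) ^ p * Real.exp (∑ a, g (φ a)) ^ (1 - p) :=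
        Finset.sum_congr rfl fun φ _ => lhs_eq φ
    _ ≤ (∑ φ ∈ E, Real.exp (∑ a, f (φ a))) ^ p * (∑ φ ∈ E, Real.exp (∑ a, g (φ a))) ^ (1 - p) := key
    _ ≤ (Mval α f ρ ε F δ σ (rhoInf ρ)) ^ p * (Mval α g ρ ε F δ σ (rhoInf ρ)) ^ (1 - p) := by
        have h1 : (∑ φ ∈ E, Real.exp (∑ a, f (φ a))) ≤ Mval α f ρ ε F δ σ (rhoInf ρ) :=
          le_csSup (MvalSet_bdd' α f ρ ε F δ σ hCf hN) ⟨E, hE, hsep, rfl⟩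
        have h2 : (∑ φ ∈ E, Real.exp (∑ a, g (φ a))) ≤ Mval α g ρ ε F δ σ (rhoInf ρ) :=
          le_csSup (MvalSet_bdd' α g ρ ε F δ σ hCg hN) ⟨E, hE, hsep, rfl⟩
        have s1 : (0:ℝ) ≤ ∑ φ ∈ E, Real.exp (∑ a, f (φ a)) :=
          Finset.sum_nonneg fun _ _ => Real.exp_nonneg _
        have s2 : (0:ℝ) ≤ ∑ φ ∈ E, Real.exp (∑ a, g (φ a)) :=
          Finset.sum_nonneg fun _ _ => Real.exp_nonneg _
        exact mul_le_mul (Real.rpow_le_rpow s1 h1 hp.le) (Real.rpow_le_rpow s2 h2 hq.le)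
          (Real.rpow_nonneg s2 _) (Real.rpow_nonneg (s1.trans h1) _)

lemma MapSet_mono (hFF : F ⊆ F') (hδδ : δ' ≤ δ) :
    MapSet α ρ F' δ' σ ⊆ MapSet α ρ F δ σ :=
  fun φ hφ s hs => lt_of_lt_of_le (hφ s (hFF hs)) hδδ

end Mval

lemma log_div_le_const {G X : Type*} [Group G] (α : G → X → X) (f : X → ℝ) (ρ : X → X → ℝ)
    (ε : ℝ) (F : Finset G) (δ : ℝ) {d : ℕ} (σ : G → Equiv.Perm (Fin d))
    {C : ℝ} (hC : ∀ x, f x ≤ C) {N : ℕ} (hN1 : 1 ≤ N)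
    (hN : ∀ E : Finset (Fin d → X),
      (∀ φ ∈ E, ∀ ψ ∈ E, φ ≠ ψ → ε ≤ rhoInf ρ φ ψ) → (E.card : ℝ) ≤ (N : ℝ) ^ d)
    (hne : (MapSet α ρ F δ σ).Nonempty) :
    Real.log (Mval α f ρ ε F δ σ (rhoInf ρ)) / (d : ℝ) ≤ Real.log N + |C| := by
  have hNpos : (0:ℝ) < N := by exact_mod_cast hN1
  have hlogN : 0 ≤ Real.log N := Real.log_nonneg (by exact_mod_cast hN1)
  have hMpos := Mval_pos α f ρ ε F δ σ hC hN hne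
  have hMle : Mval α f ρ ε F δ σ (rhoInf ρ) ≤ (N : ℝ) ^ d * Real.exp (d * C) := by
    rw [Mval_eq]
    exact csSup_le ⟨0, zero_mem_MvalSet α f ρ ε F δ σ⟩
      (MvalSet_bddAbove α f ρ ε F δ σ hC hN)
  have hlog : Real.log (Mval α f ρ ε F δ σ (rhoInf ρ)) ≤ d * Real.log N + d * C := by
    calc Real.log (Mval α f ρ ε F δ σ (rhoInf ρ))
        ≤ Real.log ((N : ℝ) ^ d * Real.exp (d * C)) := Real.log_le_log hMpos hMle
      _ = d * Real.log N + d * C := by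
          rw [Real.log_mul (by positivity) (Real.exp_ne_zero _), Real.log_exp, Real.log_pow]
  rcases Nat.eq_zero_or_pos d with hd | hd
  · subst hd
    simp only [Nat.cast_zero, div_zero]
    have := abs_nonneg C
    linarith
  · have hdpos : (0:ℝ) < d := by exact_mod_cast hd
    rw [div_le_iff₀ hdpos]
    calc Real.log (Mval α f ρ ε F δ σ (rhoInf ρ)) ≤ d * Real.log N + d * C := hlog
      _ ≤ d * Real.log N + d * |C| := by
          have := le_abs_self C
          nlinarith
      _ = (Real.log N + |C|) * d := by ring

lemma log_div_core {G X : Type*} [Group G] (α : G → X → X) (f g : X → ℝ) (ρ : X → X → ℝ)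
    (ε : ℝ) {F F1 F2 : Finset G} {δ δ1 δ2 : ℝ} {d : ℕ} (σ : G → Equiv.Perm (Fin d))
    {p : ℝ} (hp : 0 < p) (hp1 : p < 1)
    {Cf Cg : ℝ} (hCf : ∀ x, f x ≤ Cf) (hCg : ∀ x, g x ≤ Cg) {N : ℕ}
    (hN : ∀ E : Finset (Fin d → X),
      (∀ φ ∈ E, ∀ ψ ∈ E, φ ≠ ψ → ε ≤ rhoInf ρ φ ψ) → (E.card : ℝ) ≤ (N : ℝ) ^ d)
    (h1 : F1 ⊆ F) (h2 : F2 ⊆ F) (hδ1 : δ ≤ δ1) (hδ2 : δ ≤ δ2)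
    (hne : (MapSet α ρ F δ σ).Nonempty) :
    Real.log (Mval α (fun x => p * f x + (1 - p) * g x) ρ ε F δ σ (rhoInf ρ)) / (d : ℝ) ≤
      p * (Real.log (Mval α f ρ ε F1 δ1 σ (rhoInf ρ)) / (d : ℝ)) +
      (1 - p) * (Real.log (Mval α g ρ ε F2 δ2 σ (rhoInf ρ)) / (d : ℝ)) := by
  have hq : 0 < 1 - p := by linarith
  have hCh : ∀ x, p * f x + (1 - p) * g x ≤ p * Cf + (1 - p) * Cg := fun x =>
    add_le_add (mul_le_mul_of_nonneg_left (hCf x) hp.le)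
      (mul_le_mul_of_nonneg_left (hCg x) hq.le)
  have hsub1 : MapSet α ρ F δ σ ⊆ MapSet α ρ F1 δ1 σ := MapSet_mono α ρ F1 F δ1 δ σ h1 hδ1
  have hsub2 : MapSet α ρ F δ σ ⊆ MapSet α ρ F2 δ2 σ := MapSet_mono α ρ F2 F δ2 δ σ h2 hδ2
  have hMh := Mval_pos α _ ρ ε F δ σ hCh hN hne
  have hMf := Mval_pos α f ρ ε F δ σ hCf hN hne
  have hMg := Mval_pos α g ρ ε F δ σ hCg hN hne
  have hMf1 := Mval_pos α f ρ ε F1 δ1 σ hCf hN (hne.mono hsub1)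
  have hMg2 := Mval_pos α g ρ ε F2 δ2 σ hCg hN (hne.mono hsub2)
  have num : Real.log (Mval α (fun x => p * f x + (1 - p) * g x) ρ ε F δ σ (rhoInf ρ)) ≤
      p * Real.log (Mval α f ρ ε F1 δ1 σ (rhoInf ρ)) +
      (1 - p) * Real.log (Mval α g ρ ε F2 δ2 σ (rhoInf ρ)) := by
    calc Real.log (Mval α (fun x => p * f x + (1 - p) * g x) ρ ε F δ σ (rhoInf ρ))
        ≤ Real.log ((Mval α f ρ ε F δ σ (rhoInf ρ)) ^ p *
            (Mval α g ρ ε F δ σ (rhoInf ρ)) ^ (1 - p)) :=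
          Real.log_le_log hMh (Mval_holder α f g ρ ε F δ σ hp hp1 hCf hCg hN)
      _ = p * Real.log (Mval α f ρ ε F δ σ (rhoInf ρ)) +
            (1 - p) * Real.log (Mval α g ρ ε F δ σ (rhoInf ρ)) := by
          rw [Real.log_mul (Real.rpow_pos_of_pos hMf _).ne' (Real.rpow_pos_of_pos hMg _).ne',
            Real.log_rpow hMf, Real.log_rpow hMg]
      _ ≤ _ := by
          apply add_le_add
          · exact mul_le_mul_of_nonneg_left
              (Real.log_le_log hMf (Mval_mono α f ρ ε F F1 δ δ1 σ hCf hN hsub1)) hp.le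
          · exact mul_le_mul_of_nonneg_left
              (Real.log_le_log hMg (Mval_mono α g ρ ε F F2 δ δ2 σ hCg hN hsub2)) hq.le
  rcases Nat.eq_zero_or_pos d with hd | hd
  · subst hd
    simp
  · have hdpos : (0:ℝ) < d := by exact_mod_cast hd
    rw [← mul_div_assoc, ← mul_div_assoc, ← add_div]
    exact div_le_div_of_nonneg_right num hdpos.le |>.trans_eq rfl

lemma le_bot_of_forall_le_coe {x : EReal} (h : ∀ M : ℝ, x ≤ (M : EReal)) : x = ⊥ := by
  by_contra hx
  obtain ⟨M, hM1, hM2⟩ := EReal.exists_between_coe_real (Ne.bot_lt hx)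
  exact absurd (h M) (not_le.2 hM2)

lemma ereal_combo {x A B : EReal} {p q : ℝ} (hp : 0 < p) (hq : 0 < q)
    (hA : A ≠ ⊤) (hB : B ≠ ⊤)
    (H : ∀ a b : ℝ, A < a → B < b → x ≤ ((p * a + q * b : ℝ) : EReal)) :
    x ≤ (p : EReal) * A + (q : EReal) * B := by
  rcases eq_or_ne A ⊥ with hAbot | hAbot
  · obtain ⟨b₀, hb₀, -⟩ := EReal.exists_between_coe_real (Ne.lt_top hB)
    have hx : x = ⊥ := by
      apply le_bot_of_forall_le_coe
      intro M
      have := H ((M - q * b₀) / p) b₀ (hAbot ▸ bot_lt_iff_ne_bot.2 (EReal.coe_ne_bot _)) hb₀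
      have harith : p * ((M - q * b₀) / p) + q * b₀ = M := by field_simp; ring
      rwa [harith] at this
    rw [hx]
    exact bot_le
  rcases eq_or_ne B ⊥ with hBbot | hBbot
  · obtain ⟨a₀, ha₀, -⟩ := EReal.exists_between_coe_real (Ne.lt_top hA)
    have hx : x = ⊥ := by
      apply le_bot_of_forall_le_coe
      intro M
      have := H a₀ ((M - p * a₀) / q) ha₀ (hBbot ▸ bot_lt_iff_ne_bot.2 (EReal.coe_ne_bot _))
      have harith : p * a₀ + q * ((M - p * a₀) / q) = M := by field_simp; ring
      rwa [harith] at this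
    rw [hx]
    exact bot_le
  -- A, B are finite
  lift A to ℝ using ⟨hA, hAbot⟩
  lift B to ℝ using ⟨hB, hBbot⟩
  rw [← EReal.coe_mul, ← EReal.coe_mul, ← EReal.coe_add]
  rw [← EReal.le_of_forall_lt_iff_le]
  intro z hz
  rw [EReal.coe_lt_coe_iff] at hz
  set η := (z - (p * A + q * B)) / (p + q) with hη
  have hηpos : 0 < η := by
    apply div_pos (by linarith) (by linarith)
  have harith : p * (A + η) + q * (B + η) = z := by
    rw [hη]
    field_simp
    ring
  have := H (A + η) (B + η) (EReal.coe_lt_coe_iff.2 (by linarith)) (EReal.coe_lt_coe_iff.2 (by linarith))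
  rwa [harith] at this


lemma inner_le_pressure {G X : Type*} [Group G] (α : G → X → X) (f : X → ℝ) (ρ : X → X → ℝ)
    (d : ℕ → ℕ) (σ : ∀ i, G → Equiv.Perm (Fin (d i))) {ε : ℝ} (hε : 0 < ε) :
    (⨅ (F : Finset G) (_ : F.Nonempty), ⨅ (δ : ℝ) (_ : 0 < δ), Filter.limsup (fun i => if (MapSet α ρ F δ (σ i)).Nonempty then (((Real.log (Mval α f ρ ε F δ (σ i) (rhoInf ρ))) / (d i : ℝ) : ℝ) : EReal) else (⊥ : EReal)) atTop) ≤ PressureInf α f ρ d σ :=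
  le_iSup₂ (f := fun (ε : ℝ) (_ : 0 < ε) => (⨅ (F : Finset G) (_ : F.Nonempty), ⨅ (δ : ℝ) (_ : 0 < δ), Filter.limsup (fun i => if (MapSet α ρ F δ (σ i)).Nonempty then (((Real.log (Mval α f ρ ε F δ (σ i) (rhoInf ρ))) / (d i : ℝ) : ℝ) : EReal) else (⊥ : EReal)) atTop)) ε hε

lemma inner_le_const {G X : Type*} [Group G] (α : G → X → X) (f : X → ℝ) (ρ : X → X → ℝ)
    (d : ℕ → ℕ) (σ : ∀ i, G → Equiv.Perm (Fin (d i))) (ε : ℝ) {C : ℝ}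
    (hC : ∀ x, f x ≤ C) {N : ℕ} (hN1 : 1 ≤ N)
    (hN : ∀ (m : ℕ) (E : Finset (Fin m → X)),
      (∀ φ ∈ E, ∀ ψ ∈ E, φ ≠ ψ → ε ≤ rhoInf ρ φ ψ) → (E.card : ℝ) ≤ (N : ℝ) ^ m) :
    (⨅ (F : Finset G) (_ : F.Nonempty), ⨅ (δ : ℝ) (_ : 0 < δ), Filter.limsup (fun i => if (MapSet α ρ F δ (σ i)).Nonempty then (((Real.log (Mval α f ρ ε F δ (σ i) (rhoInf ρ))) / (d i : ℝ) : ℝ) : EReal) else (⊥ : EReal)) atTop) ≤ ((Real.log N + |C| : ℝ) : EReal) := by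
  refine le_trans (iInf_le_of_le {1} (iInf_le_of_le (Finset.singleton_nonempty 1)
    (iInf_le_of_le 1 (iInf_le _ one_pos)))) ?_
  refine Filter.limsup_le_of_le (by isBoundedDefault) ?_
  apply Filter.Eventually.of_forall
  intro i
  by_cases hne : (MapSet α ρ {1} 1 (σ i)).Nonempty
  · rw [if_pos hne]
    exact EReal.coe_le_coe_iff.2 (log_div_le_const α f ρ ε {1} 1 (σ i) hC hN1 (hN (d i)) hne)
  · rw [if_neg hne]
    exact bot_le

lemma inner_combo {G X : Type*} [Group G] (α : G → X → X) (f g : X → ℝ) (ρ : X → X → ℝ)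
    (d : ℕ → ℕ) (σ : ∀ i, G → Equiv.Perm (Fin (d i))) (ε : ℝ)
    {p : ℝ} (hp : 0 < p) (hp1 : p < 1)
    {Cf Cg : ℝ} (hCf : ∀ x, f x ≤ Cf) (hCg : ∀ x, g x ≤ Cg) {N : ℕ} (hN1 : 1 ≤ N)
    (hN : ∀ (m : ℕ) (E : Finset (Fin m → X)),
      (∀ φ ∈ E, ∀ ψ ∈ E, φ ≠ ψ → ε ≤ rhoInf ρ φ ψ) → (E.card : ℝ) ≤ (N : ℝ) ^ m) :
    (⨅ (F : Finset G) (_ : F.Nonempty), ⨅ (δ : ℝ) (_ : 0 < δ), Filter.limsup (fun i => if (MapSet α ρ F δ (σ i)).Nonempty then (((Real.log (Mval α (fun x => p * f x + (1 - p) * g x) ρ ε F δ (σ i) (rhoInf ρ))) / (d i : ℝ) : ℝ) : EReal) else (⊥ : EReal)) atTop) ≤ (p : EReal) * (⨅ (F : Finset G) (_ : F.Nonempty), ⨅ (δ : ℝ) (_ : 0 < δ), Filter.limsup (fun i => if (MapSet α ρ F δ (σ i)).Nonempty then (((Real.log (Mval α f ρ ε F δ (σ i) (rhoInf ρ))) /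 (d i : ℝ) : ℝ) : EReal) else (⊥ : EReal)) atTop) + ((1 - p : ℝ) : EReal) * (⨅ (F : Finset G) (_ : F.Nonempty), ⨅ (δ : ℝ) (_ : 0 < δ), Filter.limsup (fun i => if (MapSet α ρ F δ (σ i)).Nonempty then (((Real.log (Mval α g ρ ε F δ (σ i) (rhoInf ρ))) / (d i : ℝ) : ℝ) : EReal) else (⊥ : EReal)) atTop) := by
  have hq : (0:ℝ) < 1 - p := by linarith
  have hAtop : (⨅ (F : Finset G) (_ : F.Nonempty), ⨅ (δ : ℝ) (_ : 0 < δ), Filter.limsup (fun i => if (MapSet α ρ F δ (σ i)).Nonempty then (((Real.log (Mval α f ρ ε F δ (σ i) (rhoInf ρ))) / (d i : ℝ) : ℝ) : EReal) else (⊥ : EReal)) atTop) ≠ ⊤ :=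
    ne_top_of_le_ne_top (EReal.coe_ne_top _) (inner_le_const α f ρ d σ ε hCf hN1 hN)
  have hBtop : (⨅ (F : Finset G) (_ : F.Nonempty), ⨅ (δ : ℝ) (_ : 0 < δ), Filter.limsup (fun i => if (MapSet α ρ F δ (σ i)).Nonempty then (((Real.log (Mval α g ρ ε F δ (σ i) (rhoInf ρ))) / (d i : ℝ) : ℝ) : EReal) else (⊥ : EReal)) atTop) ≠ ⊤ :=
    ne_top_of_le_ne_top (EReal.coe_ne_top _) (inner_le_const α g ρ d σ ε hCg hN1 hN)
  apply ereal_combo hp hq hAtop hBtop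
  intro a b ha hb
  have hex_f : ∃ F1 : Finset G, F1.Nonempty ∧ ∃ δ1 : ℝ, 0 < δ1 ∧
      Filter.limsup (fun i => if (MapSet α ρ F1 δ1 (σ i)).Nonempty then (((Real.log (Mval α f ρ ε F1 δ1 (σ i) (rhoInf ρ))) / (d i : ℝ) : ℝ) : EReal) else (⊥ : EReal)) atTop < (a : EReal) := by
    by_contra hcon
    push_neg at hcon
    have : (a : EReal) ≤ (⨅ (F : Finset G) (_ : F.Nonempty), ⨅ (δ : ℝ) (_ : 0 < δ), Filter.limsup (fun i => if (MapSet α ρ F δ (σ i)).Nonempty then (((Real.log (Mval α f ρ ε F δ (σ i) (rhoInf ρ))) / (d i : ℝ) : ℝ) : EReal) else (⊥ : EReal)) atTop) :=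
      le_iInf fun F => le_iInf fun hF => le_iInf fun δ => le_iInf fun hδ => hcon F hF δ hδ
    exact absurd ha (not_lt.2 this)
  have hex_g : ∃ F2 : Finset G, F2.Nonempty ∧ ∃ δ2 : ℝ, 0 < δ2 ∧
      Filter.limsup (fun i => if (MapSet α ρ F2 δ2 (σ i)).Nonempty then (((Real.log (Mval α g ρ ε F2 δ2 (σ i) (rhoInf ρ))) / (d i : ℝ) : ℝ) : EReal) else (⊥ : EReal)) atTop < (b : EReal) := by
    by_contra hcon
    push_neg at hcon
    have : (b : EReal) ≤ (⨅ (F : Finset G) (_ : F.Nonempty), ⨅ (δ : ℝ) (_ : 0 < δ), Filter.limsup (fun i => if (MapSet α ρ F δ (σ i)).Nonempty then (((Real.log (Mval α g ρ ε F δ (σ i) (rhoInf ρ))) / (d i : ℝ) : ℝ) : EReal) else (⊥ : EReal)) atTop) :=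
      le_iInf fun F => le_iInf fun hF => le_iInf fun δ => le_iInf fun hδ => hcon F hF δ hδ
    exact absurd hb (not_lt.2 this)
  obtain ⟨F1, hF1, δ1, hδ1, hlim1⟩ := hex_f
  obtain ⟨F2, hF2, δ2, hδ2, hlim2⟩ := hex_g
  have hFne : (F1 ∪ F2).Nonempty := hF1.mono Finset.subset_union_left
  have hδne : (0:ℝ) < min δ1 δ2 := lt_min hδ1 hδ2
  refine le_trans (iInf_le_of_le (F1 ∪ F2) (iInf_le_of_le hFne
    (iInf_le_of_le (min δ1 δ2) (iInf_le _ hδne)))) ?_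
  refine Filter.limsup_le_of_le (by isBoundedDefault) ?_
  filter_upwards [Filter.eventually_lt_of_limsup_lt hlim1,
    Filter.eventually_lt_of_limsup_lt hlim2] with i hi1 hi2
  by_cases hne : (MapSet α ρ (F1 ∪ F2) (min δ1 δ2) (σ i)).Nonempty
  · have hne1 : (MapSet α ρ F1 δ1 (σ i)).Nonempty :=
      hne.mono (MapSet_mono α ρ F1 (F1 ∪ F2) δ1 (min δ1 δ2) (σ i)
        Finset.subset_union_left (min_le_left _ _))
    have hne2 : (MapSet α ρ F2 δ2 (σ i)).Nonempty :=
      hne.mono (MapSet_mono α ρ F2 (F1 ∪ F2) δ2 (min δ1 δ2) (σ i)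
        Finset.subset_union_right (min_le_right _ _))
    rw [if_pos hne1] at hi1
    rw [if_pos hne2] at hi2
    rw [EReal.coe_lt_coe_iff] at hi1 hi2
    rw [if_pos hne]
    apply EReal.coe_le_coe_iff.2
    calc Real.log (Mval α (fun x => p * f x + (1 - p) * g x) ρ ε (F1 ∪ F2) (min δ1 δ2)
            (σ i) (rhoInf ρ)) / (d i : ℝ)
        ≤ p * (Real.log (Mval α f ρ ε F1 δ1 (σ i) (rhoInf ρ)) / (d i : ℝ)) +
          (1 - p) * (Real.log (Mval α g ρ ε F2 δ2 (σ i) (rhoInf ρ)) / (d i : ℝ)) :=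
          log_div_core α f g ρ ε (σ i) hp hp1 hCf hCg (hN (d i))
            Finset.subset_union_left Finset.subset_union_right
            (min_le_left _ _) (min_le_right _ _) hne
      _ ≤ p * a + (1 - p) * b :=
          add_le_add (mul_le_mul_of_nonneg_left hi1.le hp.le)
            (mul_le_mul_of_nonneg_left hi2.le hq.le)
  · rw [if_neg hne]
    exact bot_le


theorem stmt16 {G : Type*} [Group G] [Countable G]
    {X : Type*} [TopologicalSpace X] [CompactSpace X] [TopologicalSpace.MetrizableSpace X]
    (α : G → X → X) (hα : ContAction G X α)
    (d : ℕ → ℕ) (σ : ∀ i, G → Equiv.Perm (Fin (d i))) (hσ : IsSoficApprox G d σ)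
    (ρ : X → X → ℝ) (hρ : IsCompatMetric X ρ)
    (hfin : PressureInf α (fun _ => (0 : ℝ)) ρ d σ ≠ (⊥ : EReal) ∧
      PressureInf α (fun _ => (0 : ℝ)) ρ d σ ≠ (⊤ : EReal))
    (f g : X → ℝ) (hf : Continuous f) (hg : Continuous g)
    (p : ℝ) (hp0 : 0 ≤ p) (hp1 : p ≤ 1) :
    PressureInf α (fun x => p * f x + (1 - p) * g x) ρ d σ ≤
      (p : EReal) * PressureInf α f ρ d σ + ((1 - p : ℝ) : EReal) * PressureInf α g ρ d σ := by
  rcases hp0.eq_or_lt with hp0' | hp0'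
  · have hfg : (fun x => p * f x + (1 - p) * g x) = g := by
      funext x; rw [← hp0']; ring
    rw [hfg, ← hp0']
    norm_num
  rcases hp1.eq_or_lt with hp1' | hp1'
  · have hfg : (fun x => p * f x + (1 - p) * g x) = f := by
      funext x; rw [hp1']; ring
    rw [hfg, hp1']
    norm_num
  have hq : (0:ℝ) < 1 - p := by linarith
  obtain ⟨Cf, hCf⟩ : ∃ C : ℝ, ∀ x, f x ≤ C := by
    rcases isEmpty_or_nonempty X with hX | hX
    · exact ⟨0, fun x => hX.elim x⟩
    · obtain ⟨x0, -, hx0⟩ := isCompact_univ.exists_isMaxOn Set.univ_nonempty hf.continuousOn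
      exact ⟨f x0, fun x => hx0 (Set.mem_univ x)⟩
  obtain ⟨Cg, hCg⟩ : ∃ C : ℝ, ∀ x, g x ≤ C := by
    rcases isEmpty_or_nonempty X with hX | hX
    · exact ⟨0, fun x => hX.elim x⟩
    · obtain ⟨x0, -, hx0⟩ := isCompact_univ.exists_isMaxOn Set.univ_nonempty hg.continuousOn
      exact ⟨g x0, fun x => hx0 (Set.mem_univ x)⟩
  rw [PressureInf]
  apply iSup₂_le
  intro ε hε
  obtain ⟨N, hN1, hN⟩ := exists_sep_bound ρ hρ hε
  refine le_trans (inner_combo α f g ρ d σ ε hp0' hp1' hCf hCg hN1 hN) ?_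
  refine add_le_add ?_ ?_
  · exact mul_le_mul_of_nonneg_left (inner_le_pressure α f ρ d σ hε) (by exact_mod_cast hp0'.le)
  · exact mul_le_mul_of_nonneg_left (inner_le_pressure α g ρ d σ hε) (by exact_mod_cast hq.le)


end Sofic
end

section
/- Let α be a continuous action of a countable sofic group G on a compact metrizable space X with sofic approximation sequence Σ, let f, g : X → ℝ be continuous, and let s ∈ G. Then P_Σ(f + g∘α_s − g, X, G) = P_Σ(f, X, G), where (g∘α_s)(x) = g(sx) for x ∈ X. -/
open Filter MeasureTheory
open scoped Pointwise Classical BigOperators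

namespace Sofic

section Aux

variable {X : Type*} [TopologicalSpace X] [CompactSpace X]

private lemma aux_unif_cont {ρ : X → X → ℝ} (hρ : IsCompatMetric X ρ) {g : X → ℝ}
    (hg : Continuous g) {η : ℝ} (hη : 0 < η) :
    ∃ τ > 0, ∀ x y : X, ρ x y ≤ τ → |g x - g y| ≤ η := by
  have hKcl : IsClosed {p : X × X | η ≤ |g p.1 - g p.2|} :=
    isClosed_le continuous_const ((hg.comp continuous_fst).sub (hg.comp continuous_snd)).abs
  have hKc : IsCompact {p : X × X | η ≤ |g p.1 - g p.2|} := hKcl.isCompact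
  rcases Set.eq_empty_or_nonempty {p : X × X | η ≤ |g p.1 - g p.2|} with hKe | hKne
  · refine ⟨1, one_pos, fun x y _ => ?_⟩
    by_contra h
    have hx : (x, y) ∈ {p : X × X | η ≤ |g p.1 - g p.2|} := (not_le.1 h).le
    rw [hKe] at hx
    exact hx
  · obtain ⟨p, hpK, hmin⟩ := hKc.exists_isMinOn hKne
      (hρ.toIsContPseudoMetric.cont.continuousOn)
    have hpK' : η ≤ |g p.1 - g p.2| := hpK
    have hppos : 0 < ρ p.1 p.2 := by
      rcases lt_or_eq_of_le (hρ.nonneg p.1 p.2) with h | h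
      · exact h
      · exfalso
        have heq := hρ.eq_of_zero p.1 p.2 h.symm
        rw [heq] at hpK'
        simp only [sub_self, abs_zero] at hpK'
        linarith
    refine ⟨ρ p.1 p.2 / 2, by linarith, fun x y hxy => ?_⟩
    by_contra h
    have hx : (x, y) ∈ {p : X × X | η ≤ |g p.1 - g p.2|} := (not_le.1 h).le
    have hm := isMinOn_iff.1 hmin (x, y) hx
    simp only at hm
    linarith

private lemma aux_cover {ρ : X → X → ℝ} (hρ : IsCompatMetric X ρ) {ε : ℝ} (hε : 0 < ε) :
    ∃ T : Finset X, ∀ x : X, ∃ t ∈ T, ρ t x < ε := by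
  obtain ⟨T, hT⟩ := isCompact_univ.elim_finite_subcover
    (fun t : X => {y | ρ t y < ε})
    (fun t => isOpen_lt (hρ.toIsContPseudoMetric.cont.comp (Continuous.prodMk_right t))
      continuous_const)
    (fun x _ => Set.mem_iUnion.2 ⟨x, by simp only [Set.mem_setOf_eq, hρ.refl]; exact hε⟩)
  refine ⟨T, fun x => ?_⟩
  rcases Set.mem_iUnion₂.1 (hT (Set.mem_univ x)) with ⟨t, ht, hxt⟩
  exact ⟨t, ht, hxt⟩

private lemma aux_card_bound {ρ : X → X → ℝ} (hρ : IsCompatMetric X ρ) {ε : ℝ} (hε : 0 < ε)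
    (d : ℕ) : ∃ N : ℕ, ∀ E : Finset (Fin d → X),
      (∀ φ ∈ E, ∀ ψ ∈ E, φ ≠ ψ → ε ≤ rhoInf ρ φ ψ) → E.card ≤ N := by
  obtain ⟨T, hT⟩ := aux_cover hρ (half_pos hε)
  have hc0 : ∀ x : X, ∃ t : {t // t ∈ T}, ρ (t : X) x < ε / 2 := fun x => by
    rcases hT x with ⟨t, ht, h⟩; exact ⟨⟨t, ht⟩, h⟩
  choose c hc using hc0
  refine ⟨Fintype.card (Fin d → {t // t ∈ T}), fun E hE => ?_⟩
  have hinj : Set.InjOn (fun φ : Fin d → X => fun a => c (φ a)) ↑E := by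
    intro φ hφ ψ hψ h
    by_contra hne
    have hsep := hE φ hφ ψ hψ hne
    have hlt : ∀ a, ρ (φ a) (ψ a) < ε := by
      intro a
      have h1 := hc (φ a)
      have h2 := hc (ψ a)
      have he : c (φ a) = c (ψ a) := congrFun h a
      rw [← he] at h2
      have htri := hρ.triangle (φ a) ((c (φ a)) : X) (ψ a)
      have hsym := hρ.symm (φ a) ((c (φ a)) : X)
      linarith
    have hbound : rhoInf ρ φ ψ < ε := by
      rcases Nat.eq_zero_or_pos d with hd | hd
      · subst hd
        have hz : rhoInf ρ φ ψ = 0 := by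
          unfold rhoInf; exact Real.iSup_of_isEmpty _
        rw [hz]; exact hε
      · haveI : Nonempty (Fin d) := ⟨⟨0, hd⟩⟩
        obtain ⟨a, ha⟩ := exists_eq_ciSup_of_finite (f := fun a : Fin d => ρ (φ a) (ψ a))
        have : rhoInf ρ φ ψ = ρ (φ a) (ψ a) := ha.symm
        rw [this]; exact hlt a
    linarith
  have hcard := Finset.card_le_card_of_injOn (fun φ : Fin d → X => fun a => c (φ a))
    (fun _ _ => Finset.mem_univ _) hinj
  simpa using hcard

end Aux
section Aux2

variable {X : Type*} [TopologicalSpace X] [CompactSpace X] {G : Type*} [Group G]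

private lemma aux_bddAbove (α : G → X → X) {ρ : X → X → ℝ}
    (hρ : IsCompatMetric X ρ) {f : X → ℝ} (hf : Continuous f) {ε : ℝ} (hε : 0 < ε)
    (F : Finset G) (δ : ℝ) {d : ℕ} (σ : G → Equiv.Perm (Fin d)) :
    BddAbove {r : ℝ | ∃ E : Finset (Fin d → X), ↑E ⊆ MapSet α ρ F δ σ ∧
      (∀ φ ∈ E, ∀ ψ ∈ E, φ ≠ ψ → ε ≤ rhoInf ρ φ ψ) ∧
      r = ∑ φ ∈ E, Real.exp (∑ a, f (φ a))} := by
  obtain ⟨N, hN⟩ := aux_card_bound hρ hε d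
  obtain ⟨Cf, hCf⟩ : ∃ C : ℝ, ∀ x, f x ≤ C := by
    obtain ⟨C, hC⟩ := (isCompact_range hf).bddAbove
    exact ⟨C, fun x => hC (Set.mem_range_self x)⟩
  refine ⟨(N : ℝ) * Real.exp (d * Cf), ?_⟩
  rintro r ⟨E, hE, hsep, rfl⟩
  calc (∑ φ ∈ E, Real.exp (∑ a, f (φ a)))
      ≤ ∑ _φ ∈ E, Real.exp (d * Cf) := by
        refine Finset.sum_le_sum fun φ _ => Real.exp_le_exp.2 ?_
        calc ∑ a, f (φ a) ≤ ∑ _a : Fin d, Cf := Finset.sum_le_sum fun a _ => hCf _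
          _ = d * Cf := by simp [Finset.sum_const, mul_comm]
    _ = (E.card : ℝ) * Real.exp (d * Cf) := by rw [Finset.sum_const, nsmul_eq_mul]
    _ ≤ (N : ℝ) * Real.exp (d * Cf) :=
        mul_le_mul_of_nonneg_right (by exact_mod_cast hN E hsep) (Real.exp_pos _).le

private lemma aux_zero_mem (α : G → X → X) (f : X → ℝ) (ρ : X → X → ℝ) (ε : ℝ)
    (F : Finset G) (δ : ℝ) {d : ℕ} (σ : G → Equiv.Perm (Fin d)) :
    (0 : ℝ) ∈ {r : ℝ | ∃ E : Finset (Fin d → X), ↑E ⊆ MapSet α ρ F δ σ ∧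
      (∀ φ ∈ E, ∀ ψ ∈ E, φ ≠ ψ → ε ≤ rhoInf ρ φ ψ) ∧
      r = ∑ φ ∈ E, Real.exp (∑ a, f (φ a))} :=
  ⟨∅, by simp, by simp, by simp⟩

private lemma aux_Mval_nonneg (α : G → X → X) {ρ : X → X → ℝ}
    (hρ : IsCompatMetric X ρ) {f : X → ℝ} (hf : Continuous f) {ε : ℝ} (hε : 0 < ε)
    (F : Finset G) (δ : ℝ) {d : ℕ} (σ : G → Equiv.Perm (Fin d)) :
    0 ≤ Mval α f ρ ε F δ σ (rhoInf ρ) :=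
  le_csSup (aux_bddAbove α hρ hf hε F δ σ) (aux_zero_mem α f ρ ε F δ σ)

private lemma aux_Mval_pos (α : G → X → X) {ρ : X → X → ℝ}
    (hρ : IsCompatMetric X ρ) {f : X → ℝ} (hf : Continuous f) {ε : ℝ} (hε : 0 < ε)
    (F : Finset G) (δ : ℝ) {d : ℕ} (σ : G → Equiv.Perm (Fin d))
    (hne : (MapSet α ρ F δ σ).Nonempty) :
    0 < Mval α f ρ ε F δ σ (rhoInf ρ) := by
  obtain ⟨φ, hφ⟩ := hne
  have hmem : Real.exp (∑ a, f (φ a)) ∈ {r : ℝ | ∃ E : Finset (Fin d → X),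
      ↑E ⊆ MapSet α ρ F δ σ ∧
      (∀ φ ∈ E, ∀ ψ ∈ E, φ ≠ ψ → ε ≤ rhoInf ρ φ ψ) ∧
      r = ∑ φ ∈ E, Real.exp (∑ a, f (φ a))} := by
    refine ⟨{φ}, by simpa using hφ, ?_, by simp⟩
    intro ψ hψ ψ' hψ' hne'
    simp only [Finset.mem_singleton] at hψ hψ'
    exact absurd (hψ.trans hψ'.symm) hne'
  exact (Real.exp_pos _).trans_le (le_csSup (aux_bddAbove α hρ hf hε F δ σ) hmem)

private lemma aux_key_sum {ρ : X → X → ℝ} (hρ : IsCompatMetric X ρ) {g : X → ℝ}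
    {C τ η δ' : ℝ} (hC0 : 0 ≤ C) (hC : ∀ x, |g x| ≤ C) (hτ : 0 < τ)
    (huc : ∀ x y, ρ x y ≤ τ → |g x - g y| ≤ η / 2)
    (hδ'0 : 0 < δ') (hδ'2 : 2 * C / τ ^ 2 * δ' ^ 2 ≤ η / 2)
    {d : ℕ} (u v : Fin d → X) (huv : rho2 ρ u v < δ') :
    ∑ a, (g (u a) - g (v a)) ≤ d * η := by
  rcases Nat.eq_zero_or_pos d with hd | hd
  · subst hd; simp
  have hη2 : 0 ≤ η / 2 := by
    have h0 := huc (u ⟨0, hd⟩) (u ⟨0, hd⟩) (by rw [hρ.refl]; exact hτ.le)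
    simpa using (abs_nonneg _).trans h0
  have hd' : (0 : ℝ) < d := by exact_mod_cast hd
  have hsum2 : ∑ a, (ρ (u a) (v a)) ^ 2 ≤ δ' ^ 2 * d := by
    have h1 : (1 / (d : ℝ)) * ∑ a, (ρ (u a) (v a)) ^ 2 < δ' ^ 2 :=
      (Real.sqrt_lt' hδ'0).1 huv
    have h2 := mul_lt_mul_of_pos_left h1 hd'
    have h3 : (d : ℝ) * ((1 / (d : ℝ)) * ∑ a, (ρ (u a) (v a)) ^ 2)
        = ∑ a, (ρ (u a) (v a)) ^ 2 := by
      field_simp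
    rw [h3] at h2
    nlinarith
  set K := 2 * C / τ ^ 2 with hK
  have hK0 : 0 ≤ K := by positivity
  have hper : ∀ a, g (u a) - g (v a) ≤ η / 2 + K * (ρ (u a) (v a)) ^ 2 := by
    intro a
    rcases le_or_gt (ρ (u a) (v a)) τ with hle | hgt
    · have h1 := huc _ _ hle
      have h2 : 0 ≤ K * (ρ (u a) (v a)) ^ 2 := by positivity
      have h3 := le_abs_self (g (u a) - g (v a))
      linarith
    · have h1 : τ ^ 2 ≤ (ρ (u a) (v a)) ^ 2 := by nlinarith
      have h2 : K * τ ^ 2 = 2 * C := by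
        rw [hK]; field_simp
      have h3 : 2 * C ≤ K * (ρ (u a) (v a)) ^ 2 := by nlinarith
      have h5 := abs_le.1 (hC (u a))
      have h6 := abs_le.1 (hC (v a))
      linarith
  calc ∑ a, (g (u a) - g (v a))
      ≤ ∑ a, (η / 2 + K * (ρ (u a) (v a)) ^ 2) := Finset.sum_le_sum fun a _ => hper a
    _ = (d : ℝ) * (η / 2) + K * ∑ a, (ρ (u a) (v a)) ^ 2 := by
        rw [Finset.sum_add_distrib, Finset.sum_const, Finset.mul_sum]
        simp [nsmul_eq_mul]
    _ ≤ (d : ℝ) * (η / 2) + K * (δ' ^ 2 * d) :=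
        add_le_add_right (mul_le_mul_of_nonneg_left hsum2 hK0) _
    _ = (d : ℝ) * (η / 2) + (K * δ' ^ 2) * d := by ring
    _ ≤ (d : ℝ) * (η / 2) + (η / 2) * d :=
        add_le_add_right (mul_le_mul_of_nonneg_right hδ'2 hd'.le) _
    _ = d * η := by ring

end Aux2
set_option maxHeartbeats 1000000 in
private lemma aux_core_le {G : Type*} [Group G]
    {X : Type*} [TopologicalSpace X] [CompactSpace X]
    (α : G → X → X) (hα : ContAction G X α)
    (d : ℕ → ℕ) (σ : ∀ i, G → Equiv.Perm (Fin (d i)))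
    (f g f' : X → ℝ) (hf : Continuous f) (hg : Continuous g) (s : G)
    (hf' : f' = fun x => f x + g (α s x) - g x)
    (ρ : X → X → ℝ) (hρ : IsCompatMetric X ρ) (ε : ℝ) (hε : 0 < ε) :
    (⨅ (F : Finset G) (_ : F.Nonempty), ⨅ (δ : ℝ) (_ : 0 < δ),
      Filter.limsup (fun i =>
        if (MapSet α ρ F δ (σ i)).Nonempty then
          (((Real.log (Mval α f' ρ ε F δ (σ i) (rhoInf ρ))) / (d i : ℝ) : ℝ) : EReal)
        else (⊥ : EReal)) atTop)
    ≤ ⨅ (F : Finset G) (_ : F.Nonempty), ⨅ (δ : ℝ) (_ : 0 < δ),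
      Filter.limsup (fun i =>
        if (MapSet α ρ F δ (σ i)).Nonempty then
          (((Real.log (Mval α f ρ ε F δ (σ i) (rhoInf ρ))) / (d i : ℝ) : ℝ) : EReal)
        else (⊥ : EReal)) atTop := by
  have hf'c : Continuous f' := by
    rw [hf']; exact (hf.add (hg.comp (hα.cont s))).sub hg
  have hf'x : ∀ x, f' x = f x + g (α s x) - g x := fun x => by rw [hf']
  by_contra hlt
  push_neg at hlt
  obtain ⟨c, hBc, hcA⟩ := EReal.exists_between_coe_real hlt
  obtain ⟨F, hBc⟩ := iInf_lt_iff.1 hBc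
  obtain ⟨hFne, hBc⟩ := iInf_lt_iff.1 hBc
  obtain ⟨δ, hBc⟩ := iInf_lt_iff.1 hBc
  obtain ⟨hδ, hBc⟩ := iInf_lt_iff.1 hBc
  obtain ⟨m, hm1, hm2⟩ := EReal.exists_between_coe_real hBc
  set η := c - m with hηdef
  have hη : 0 < η := by
    have := EReal.coe_lt_coe_iff.1 hm2
    simp only [hηdef]; linarith
  obtain ⟨C0, hC0'⟩ : ∃ C : ℝ, ∀ x, |g x| ≤ C := by
    obtain ⟨C, hC⟩ := (isCompact_range hg.abs).bddAbove
    exact ⟨C, fun x => hC (Set.mem_range_self x)⟩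
  set C := max C0 0 with hCdef
  have hC : ∀ x, |g x| ≤ C := fun x => (hC0' x).trans (le_max_left _ _)
  have hC0 : 0 ≤ C := le_max_right _ _
  obtain ⟨τ, hτ, huc⟩ := aux_unif_cont hρ hg (half_pos hη)
  have hu : 0 < η / (4 * (C + 1)) := by positivity
  set δ' := min δ (τ * Real.sqrt (η / (4 * (C + 1)))) with hδ'def
  have hδ'0 : 0 < δ' := lt_min hδ (by positivity)
  have hδ'2 : 2 * C / τ ^ 2 * δ' ^ 2 ≤ η / 2 := by
    have h1 : δ' ≤ τ * Real.sqrt (η / (4 * (C + 1))) := min_le_right _ _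
    have h2 : δ' ^ 2 ≤ τ ^ 2 * (η / (4 * (C + 1))) := by
      have h3 := pow_le_pow_left₀ hδ'0.le h1 2
      rwa [mul_pow, Real.sq_sqrt hu.le] at h3
    have key : 2 * C / τ ^ 2 * δ' ^ 2 ≤ 2 * C / τ ^ 2 * (τ ^ 2 * (η / (4 * (C + 1)))) :=
      mul_le_mul_of_nonneg_left h2 (by positivity)
    have heq : 2 * C / τ ^ 2 * (τ ^ 2 * (η / (4 * (C + 1)))) = 2 * C * η / (4 * (C + 1)) := by
      field_simp
    rw [heq] at key
    have hfin : 2 * C * η / (4 * (C + 1)) ≤ η / 2 := by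
      rw [div_le_div_iff₀ (by positivity) (by norm_num)]
      nlinarith
    linarith
  set F' := insert s F with hF'def
  have hF'ne : F'.Nonempty := ⟨s, Finset.mem_insert_self s F⟩
  -- termwise inequality
  have hterm : ∀ i,
      (if (MapSet α ρ F' δ' (σ i)).Nonempty then
        (((Real.log (Mval α f' ρ ε F' δ' (σ i) (rhoInf ρ))) / (d i : ℝ) : ℝ) : EReal)
      else (⊥ : EReal))
      ≤ (if (MapSet α ρ F δ (σ i)).Nonempty then
        (((Real.log (Mval α f ρ ε F δ (σ i) (rhoInf ρ))) / (d i : ℝ) : ℝ) : EReal)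
      else (⊥ : EReal)) + (η : EReal) := by
    intro i
    have hsub : MapSet α ρ F' δ' (σ i) ⊆ MapSet α ρ F δ (σ i) := by
      intro φ hφ t ht
      exact lt_of_lt_of_le (hφ t (Finset.mem_insert_of_mem ht)) (min_le_left _ _)
    by_cases hne : (MapSet α ρ F' δ' (σ i)).Nonempty
    · have hneR : (MapSet α ρ F δ (σ i)).Nonempty := hne.mono hsub
      rw [if_pos hne, if_pos hneR]
      have hsum : ∀ φ ∈ MapSet α ρ F' δ' (σ i),
          ∑ a, f' (φ a) ≤ (∑ a, f (φ a)) + (d i : ℝ) * η := by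
        intro φ hφ
        have h1 : rho2 ρ (fun a => α s (φ a)) (fun a => φ (σ i s a)) < δ' :=
          hφ s (Finset.mem_insert_self s F)
        have h2 := aux_key_sum hρ hC0 hC hτ huc hδ'0 hδ'2
          (fun a => α s (φ a)) (fun a => φ (σ i s a)) h1
        have h3 : ∑ a, g (φ (σ i s a)) = ∑ a, g (φ a) :=
          Equiv.sum_comp (σ i s) (fun a => g (φ a))
        have h4 : ∑ a, f' (φ a) = ∑ a, (f (φ a) + g (α s (φ a)) - g (φ a)) :=
          Finset.sum_congr rfl fun a _ => hf'x _
        have h5 : ∑ a, (f (φ a) + g (α s (φ a)) - g (φ a))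
            = (∑ a, f (φ a)) + ((∑ a, g (α s (φ a))) - ∑ a, g (φ a)) := by
          rw [Finset.sum_sub_distrib, Finset.sum_add_distrib]
          ring
        have h6 : (∑ a, g (α s (φ a))) - ∑ a, g (φ a) ≤ (d i : ℝ) * η := by
          rw [← h3, ← Finset.sum_sub_distrib]
          exact h2
        rw [h4, h5]
        linarith
      have hMle : Mval α f' ρ ε F' δ' (σ i) (rhoInf ρ)
          ≤ Real.exp ((d i : ℝ) * η) * Mval α f ρ ε F δ (σ i) (rhoInf ρ) := by
        apply Real.sSup_le
        · rintro r ⟨E, hE, hsep, rfl⟩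
          have hle1 : ∑ φ ∈ E, Real.exp (∑ a, f' (φ a))
              ≤ Real.exp ((d i : ℝ) * η) * ∑ φ ∈ E, Real.exp (∑ a, f (φ a)) := by
            rw [Finset.mul_sum]
            refine Finset.sum_le_sum fun φ hφ => ?_
            rw [← Real.exp_add]
            refine Real.exp_le_exp.2 ?_
            have := hsum φ (hE hφ)
            linarith
          refine hle1.trans (mul_le_mul_of_nonneg_left ?_ (Real.exp_pos _).le)
          exact le_csSup (aux_bddAbove α hρ hf hε F δ (σ i))
            ⟨E, hE.trans hsub, hsep, rfl⟩
        · exact mul_nonneg (Real.exp_pos _).le (aux_Mval_nonneg α hρ hf hε F δ (σ i))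
      have hM'pos : 0 < Mval α f' ρ ε F' δ' (σ i) (rhoInf ρ) :=
        aux_Mval_pos α hρ hf'c hε F' δ' (σ i) hne
      have hMpos : 0 < Mval α f ρ ε F δ (σ i) (rhoInf ρ) :=
        aux_Mval_pos α hρ hf hε F δ (σ i) hneR
      have hlog : Real.log (Mval α f' ρ ε F' δ' (σ i) (rhoInf ρ))
          ≤ (d i : ℝ) * η + Real.log (Mval α f ρ ε F δ (σ i) (rhoInf ρ)) := by
        have h7 := Real.log_le_log hM'pos hMle
        rwa [Real.log_mul (Real.exp_ne_zero _) (ne_of_gt hMpos), Real.log_exp] at h7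
      have hreal : Real.log (Mval α f' ρ ε F' δ' (σ i) (rhoInf ρ)) / (d i : ℝ)
          ≤ Real.log (Mval α f ρ ε F δ (σ i) (rhoInf ρ)) / (d i : ℝ) + η := by
        rcases Nat.eq_zero_or_pos (d i) with hdi | hdi
        · have hz : ((d i : ℕ) : ℝ) = 0 := by rw [hdi]; norm_num
          rw [hz, div_zero, div_zero]
          linarith
        · have hdr : (0 : ℝ) < (d i : ℝ) := by exact_mod_cast hdi
          have h8 := (div_le_div_iff_of_pos_right hdr).2 hlog
          rw [add_div, mul_div_cancel_left₀ _ (ne_of_gt hdr)] at h8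
          linarith
      calc (((Real.log (Mval α f' ρ ε F' δ' (σ i) (rhoInf ρ))) / (d i : ℝ) : ℝ) : EReal)
          ≤ (((Real.log (Mval α f ρ ε F δ (σ i) (rhoInf ρ))) / (d i : ℝ) + η : ℝ) : EReal) :=
            EReal.coe_le_coe_iff.2 hreal
        _ = (((Real.log (Mval α f ρ ε F δ (σ i) (rhoInf ρ))) / (d i : ℝ) : ℝ) : EReal)
            + (η : EReal) := EReal.coe_add _ _
    · rw [if_neg hne]
      exact bot_le
  -- limsup bound
  have hev := eventually_lt_of_limsup_lt hm1
  have hlimL : Filter.limsup (fun i =>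
      if (MapSet α ρ F' δ' (σ i)).Nonempty then
        (((Real.log (Mval α f' ρ ε F' δ' (σ i) (rhoInf ρ))) / (d i : ℝ) : ℝ) : EReal)
      else (⊥ : EReal)) atTop ≤ (c : EReal) := by
    apply Filter.limsup_le_of_le
    · isBoundedDefault
    · filter_upwards [hev] with i hi
      calc (if (MapSet α ρ F' δ' (σ i)).Nonempty then
            (((Real.log (Mval α f' ρ ε F' δ' (σ i) (rhoInf ρ))) / (d i : ℝ) : ℝ) : EReal)
          else (⊥ : EReal))
          ≤ (if (MapSet α ρ F δ (σ i)).Nonempty then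
            (((Real.log (Mval α f ρ ε F δ (σ i) (rhoInf ρ))) / (d i : ℝ) : ℝ) : EReal)
          else (⊥ : EReal)) + (η : EReal) := hterm i
        _ ≤ (m : EReal) + (η : EReal) := add_le_add_left hi.le _
        _ = ((m + η : ℝ) : EReal) := (EReal.coe_add m η).symm
        _ = (c : EReal) := by
            norm_num [hηdef]
  have hA : (⨅ (F : Finset G) (_ : F.Nonempty), ⨅ (δ : ℝ) (_ : 0 < δ),
      Filter.limsup (fun i =>
        if (MapSet α ρ F δ (σ i)).Nonempty then
          (((Real.log (Mval α f' ρ ε F δ (σ i) (rhoInf ρ))) / (d i : ℝ) : ℝ) : EReal)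
        else (⊥ : EReal)) atTop) ≤ (c : EReal) := by
    refine le_trans ?_ hlimL
    exact iInf_le_of_le F' (iInf_le_of_le hF'ne (iInf_le_of_le δ' (iInf_le_of_le hδ'0 le_rfl)))
  exact absurd (hA.trans_lt hcA) (lt_irrefl _)
private lemma aux_pressure_le {G : Type*} [Group G]
    {X : Type*} [TopologicalSpace X] [CompactSpace X]
    (α : G → X → X) (hα : ContAction G X α)
    (d : ℕ → ℕ) (σ : ∀ i, G → Equiv.Perm (Fin (d i)))
    (f g f' : X → ℝ) (hf : Continuous f) (hg : Continuous g) (s : G)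
    (hf' : f' = fun x => f x + g (α s x) - g x)
    (ρ : X → X → ℝ) (hρ : IsCompatMetric X ρ) :
    PressureInf α f' ρ d σ ≤ PressureInf α f ρ d σ := by
  unfold PressureInf
  refine iSup₂_le fun ε hε => ?_
  exact le_trans (aux_core_le α hα d σ f g f' hf hg s hf' ρ hρ ε hε)
    (le_iSup₂ (f := fun (ε : ℝ) (_ : 0 < ε) =>
      ⨅ (F : Finset G) (_ : F.Nonempty), ⨅ (δ : ℝ) (_ : 0 < δ),
        Filter.limsup (fun i =>
          if (MapSet α ρ F δ (σ i)).Nonempty then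
            (((Real.log (Mval α f ρ ε F δ (σ i) (rhoInf ρ))) / (d i : ℝ) : ℝ) : EReal)
          else (⊥ : EReal)) atTop) ε hε)

theorem stmt17 {G : Type*} [Group G] [Countable G]
    {X : Type*} [TopologicalSpace X] [CompactSpace X] [TopologicalSpace.MetrizableSpace X]
    (α : G → X → X) (hα : ContAction G X α)
    (d : ℕ → ℕ) (σ : ∀ i, G → Equiv.Perm (Fin (d i))) (hσ : IsSoficApprox G d σ)
    (f g : X → ℝ) (hf : Continuous f) (hg : Continuous g) (s : G)
    (ρ : X → X → ℝ) (hρ : IsCompatMetric X ρ) :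
    PressureInf α (fun x => f x + g (α s x) - g x) ρ d σ = PressureInf α f ρ d σ := by
  refine le_antisymm (aux_pressure_le α hα d σ f g _ hf hg s rfl ρ hρ) ?_
  refine aux_pressure_le α hα d σ (fun x => f x + g (α s x) - g x) (fun x => -(g x)) f
    ((hf.add (hg.comp (hα.cont s))).sub hg) hg.neg s ?_ ρ hρ
  funext x
  show f x = f x + g (α s x) - g x + -(g (α s x)) - -(g x)
  ring

end Sofic
end

section
/- Let α be a continuous action of a countable sofic group G on a compact metrizable space X with sofic approximation sequence Σ, and assume h_Σ(X,G) = P_Σ(0,X,G) ≠ ±∞ (so that P_Σ(·,X,G) is finite valued). Let μ : B(X) → ℝ be a finite signed measure on the Borel σ-algebra B(X) of X. If ∫_X f dμ ≤ P_Σ(f, X, G) for all continuous f : X → ℝ, then μ is a G-invariant Borel probability measure on X, i.e. μ ∈ M_G(X). -/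
open Filter MeasureTheory
open scoped Pointwise Classical BigOperators

namespace Sofic

section Aux

variable {G : Type*} [Group G] {X : Type*} [TopologicalSpace X] [CompactSpace X]

lemma exists_norm_bound {f : X → ℝ} (hf : Continuous f) :
    ∃ B : ℝ, 0 ≤ B ∧ ∀ x, |f x| ≤ B := by
  let F := BoundedContinuousFunction.mkOfCompact (⟨f, hf⟩ : C(X, ℝ))
  refine ⟨‖F‖, norm_nonneg F, fun x => ?_⟩
  simpa [F, Real.norm_eq_abs] using F.norm_coe_le_norm x

lemma exists_cover (ρ : X → X → ℝ) (hρ : IsCompatMetric X ρ) {ε : ℝ} (hε : 0 < ε) :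
    ∃ T : Finset X, ∀ x : X, ∃ t ∈ T, ρ t x < ε := by
  obtain ⟨T, hT⟩ := IsCompact.elim_finite_subcover isCompact_univ
      (fun t : X => {y | ρ t y < ε})
      (fun t => isOpen_lt (hρ.cont.comp (Continuous.prodMk_right t)) continuous_const)
      (fun x _ => Set.mem_iUnion.2 ⟨x, by simp [hρ.refl x, hε]⟩)
  refine ⟨T, fun x => ?_⟩
  have := hT (Set.mem_univ x)
  simpa using this

lemma sep_card (ρ : X → X → ℝ) (hρ : IsCompatMetric X ρ) {ε : ℝ} (hε : 0 < ε) :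
    ∃ N : ℕ, ∀ (n : ℕ) (E : Finset (Fin n → X)),
      (∀ φ ∈ E, ∀ ψ ∈ E, φ ≠ ψ → ε ≤ rhoInf ρ φ ψ) → (E.card : ℝ) ≤ (N : ℝ) ^ n := by
  obtain ⟨T, hT⟩ := exists_cover ρ hρ (half_pos hε)
  refine ⟨T.card, fun n E hsep => ?_⟩
  have hmap : ∀ x : X, ∃ t : {t // t ∈ T}, ρ (t : X) x < ε / 2 := fun x => by
    obtain ⟨t, ht, h⟩ := hT x; exact ⟨⟨t, ht⟩, h⟩
  classical
  set pick : X → {t // t ∈ T} := fun x => (hmap x).choose with hpickdef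
  have hpick : ∀ x, ρ ((pick x : X)) x < ε / 2 := fun x => (hmap x).choose_spec
  have hinj : Set.InjOn (fun φ : Fin n → X => fun a => pick (φ a)) ↑E := by
    intro φ hφ ψ hψ h
    by_contra hne
    have hsep' := hsep φ hφ ψ hψ hne
    have hlt : ∀ a, ρ (φ a) (ψ a) < ε := by
      intro a
      have h1 := hpick (φ a)
      have h2 := hpick (ψ a)
      have heq : pick (φ a) = pick (ψ a) := congrFun h a
      have htri := hρ.triangle (φ a) ((pick (φ a) : X)) (ψ a)
      rw [hρ.symm (φ a) ((pick (φ a) : X))] at htri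
      rw [heq] at htri h1
      linarith
    rcases Nat.eq_zero_or_pos n with hn | hn
    · subst hn
      exact hne (funext fun a => a.elim0)
    · have hne' : Nonempty (Fin n) := ⟨⟨0, hn⟩⟩
      obtain ⟨a₀, ha₀⟩ := Finite.exists_max fun a => ρ (φ a) (ψ a)
      have hsup : rhoInf ρ φ ψ ≤ ρ (φ a₀) (ψ a₀) := ciSup_le ha₀
      linarith [hlt a₀]
  have hcard := Finset.card_le_card_of_injOn (fun φ : Fin n → X => fun a => pick (φ a))
      (fun φ _ => Finset.mem_univ _) hinj
  calc (E.card : ℝ) ≤ ((Finset.univ : Finset (Fin n → {t // t ∈ T})).card : ℝ) := by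
        exact_mod_cast hcard
    _ = ((T.card : ℝ)) ^ n := by
        rw [Finset.card_univ, Fintype.card_fun]
        push_cast [Fintype.card_coe, Fintype.card_fin]
        ring

lemma unif_cont {ρ : X → X → ℝ} (hρ : IsCompatMetric X ρ) {f : X → ℝ} (hf : Continuous f)
    {η : ℝ} (hη : 0 < η) :
    ∃ δ : ℝ, 0 < δ ∧ ∀ x y, ρ x y < δ → |f x - f y| ≤ η := by
  set K := {p : X × X | η ≤ |f p.1 - f p.2|} with hK
  have hKclosed : IsClosed K :=
    isClosed_le continuous_const ((hf.comp continuous_fst).sub (hf.comp continuous_snd)).abs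
  rcases K.eq_empty_or_nonempty with hKe | hKne
  · refine ⟨1, one_pos, fun x y _ => ?_⟩
    by_contra h
    push_neg at h
    have : (x, y) ∈ K := h.le
    rw [hKe] at this
    exact this
  · obtain ⟨p₀, hp₀K, hp₀min⟩ := hKclosed.isCompact.exists_isMinOn hKne hρ.cont.continuousOn
    have hδpos : 0 < ρ p₀.1 p₀.2 := by
      rcases lt_or_eq_of_le (hρ.nonneg p₀.1 p₀.2) with h | h
      · exact h
      · exfalso
        have heq := hρ.eq_of_zero _ _ h.symm
        have : η ≤ |f p₀.1 - f p₀.2| := hp₀K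
        rw [heq] at this
        simp at this
        linarith
    refine ⟨ρ p₀.1 p₀.2, hδpos, fun x y hxy => ?_⟩
    by_contra h
    push_neg at h
    have hmem : (x, y) ∈ K := h.le
    exact absurd hxy (not_lt.2 (isMinOn_iff.1 hp₀min _ hmem))

end Aux

section Aux2

variable {G : Type*} [Group G] {X : Type*} [TopologicalSpace X] [CompactSpace X]

lemma mval_set_bddAbove {ρ : X → X → ℝ} (hρ : IsCompatMetric X ρ) {ε : ℝ} (hε : 0 < ε)
    {f : X → ℝ} (hf : Continuous f) {n : ℕ} (Y : Set (Fin n → X)) :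
    BddAbove {r : ℝ | ∃ E : Finset (Fin n → X), ↑E ⊆ Y ∧
      (∀ φ ∈ E, ∀ ψ ∈ E, φ ≠ ψ → ε ≤ rhoInf ρ φ ψ) ∧
      r = ∑ φ ∈ E, Real.exp (∑ a, f (φ a))} := by
  obtain ⟨N, hN⟩ := sep_card ρ hρ hε
  obtain ⟨B, hB0, hB⟩ := exists_norm_bound hf
  refine ⟨(N : ℝ) ^ n * Real.exp (n * B), ?_⟩
  rintro r ⟨E, hE, hsep, rfl⟩
  calc ∑ φ ∈ E, Real.exp (∑ a, f (φ a)) ≤ ∑ _φ ∈ E, Real.exp (n * B) := by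
        refine Finset.sum_le_sum fun φ _ => Real.exp_le_exp.2 ?_
        calc ∑ a, f (φ a) ≤ ∑ _a : Fin n, B :=
              Finset.sum_le_sum fun a _ => (abs_le.1 (hB _)).2
          _ = n * B := by
              rw [Finset.sum_const, Finset.card_univ, Fintype.card_fin, nsmul_eq_mul]
    _ = (E.card : ℝ) * Real.exp (n * B) := by rw [Finset.sum_const, nsmul_eq_mul]
    _ ≤ (N : ℝ) ^ n * Real.exp (n * B) :=
        mul_le_mul_of_nonneg_right (hN n E hsep) (Real.exp_nonneg _)

lemma exp_le_Mval (α : G → X → X) {ρ : X → X → ℝ} (hρ : IsCompatMetric X ρ) {ε : ℝ}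
    (hε : 0 < ε) {f : X → ℝ} (hf : Continuous f) {n : ℕ} (σ' : G → Equiv.Perm (Fin n))
    {F : Finset G} {δ : ℝ} {φ₀ : Fin n → X} (hφ₀ : φ₀ ∈ MapSet α ρ F δ σ') :
    Real.exp (∑ a, f (φ₀ a)) ≤ Mval α f ρ ε F δ σ' (rhoInf ρ) := by
  rw [Mval]
  refine le_csSup (mval_set_bddAbove hρ hε hf _) ?_
  refine ⟨{φ₀}, by simpa using hφ₀, ?_, by simp⟩
  intro φ hφ ψ hψ hne
  simp only [Finset.mem_singleton] at hφ hψ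
  exact absurd (hφ.trans hψ.symm) hne

lemma card_le_Mval0 (α : G → X → X) {ρ : X → X → ℝ} (hρ : IsCompatMetric X ρ) {ε : ℝ}
    (hε : 0 < ε) {n : ℕ} (σ' : G → Equiv.Perm (Fin n)) {F : Finset G} {δ : ℝ}
    {E : Finset (Fin n → X)} (hE : ↑E ⊆ MapSet α ρ F δ σ')
    (hsep : ∀ φ ∈ E, ∀ ψ ∈ E, φ ≠ ψ → ε ≤ rhoInf ρ φ ψ) :
    (E.card : ℝ) ≤ Mval α (fun _ => (0 : ℝ)) ρ ε F δ σ' (rhoInf ρ) := by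
  rw [Mval]
  refine le_csSup (mval_set_bddAbove hρ hε continuous_const _) ⟨E, hE, hsep, by simp⟩

lemma Mval0_nonneg (α : G → X → X) {ρ : X → X → ℝ} (hρ : IsCompatMetric X ρ) {ε : ℝ}
    (hε : 0 < ε) {n : ℕ} (σ' : G → Equiv.Perm (Fin n)) (F : Finset G) (δ : ℝ) :
    0 ≤ Mval α (fun _ => (0 : ℝ)) ρ ε F δ σ' (rhoInf ρ) := by
  rw [Mval]
  refine le_csSup (mval_set_bddAbove hρ hε continuous_const _) ⟨∅, by simp, by simp, by simp⟩

lemma MapSet_mono_s19 (α : G → X → X) {ρ : X → X → ℝ} {n : ℕ} (σ' : G → Equiv.Perm (Fin n))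
    {F F₀ : Finset G} {δ δ₀ : ℝ} (hFF : F₀ ⊆ F) (hδ : δ ≤ δ₀) :
    MapSet α ρ F δ σ' ⊆ MapSet α ρ F₀ δ₀ σ' :=
  fun φ hφ s hs => lt_of_lt_of_le (hφ s (hFF hs)) hδ

lemma Mval_le_exp_mul (α : G → X → X) {ρ : X → X → ℝ} (hρ : IsCompatMetric X ρ) {ε : ℝ}
    (hε : 0 < ε) {f : X → ℝ} (hf : Continuous f) {n : ℕ} (σ' : G → Equiv.Perm (Fin n))
    {F F₀ : Finset G} {δ δ₀ : ℝ}
    (hsub : MapSet α ρ F δ σ' ⊆ MapSet α ρ F₀ δ₀ σ') {c : ℝ}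
    (hkey : ∀ φ ∈ MapSet α ρ F δ σ', ∑ a, f (φ a) ≤ n * c) :
    Mval α f ρ ε F δ σ' (rhoInf ρ) ≤
      Real.exp (n * c) * Mval α (fun _ => (0 : ℝ)) ρ ε F₀ δ₀ σ' (rhoInf ρ) := by
  have h0 := Mval0_nonneg α hρ hε σ' F₀ δ₀
  conv_lhs => rw [Mval]
  refine Real.sSup_le ?_ (mul_nonneg (Real.exp_nonneg _) h0)
  rintro r ⟨E, hE, hsep, rfl⟩
  have hcard : (E.card : ℝ) ≤ Mval α (fun _ => (0 : ℝ)) ρ ε F₀ δ₀ σ' (rhoInf ρ) :=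
    card_le_Mval0 α hρ hε σ' (hE.trans hsub) hsep
  calc ∑ φ ∈ E, Real.exp (∑ a, f (φ a)) ≤ ∑ _φ ∈ E, Real.exp (n * c) :=
        Finset.sum_le_sum fun φ hφ => Real.exp_le_exp.2 (hkey φ (hE hφ))
    _ = Real.exp (n * c) * (E.card : ℝ) := by
        rw [Finset.sum_const, nsmul_eq_mul]; ring
    _ ≤ Real.exp (n * c) * Mval α (fun _ => (0 : ℝ)) ρ ε F₀ δ₀ σ' (rhoInf ρ) :=
        mul_le_mul_of_nonneg_left hcard (Real.exp_nonneg _)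

lemma sum_est (α : G → X → X) {ρ : X → X → ℝ} (hρ : IsCompatMetric X ρ)
    {f : X → ℝ} (hf : Continuous f) (s : G) {η : ℝ} (hη : 0 < η) :
    ∃ δ : ℝ, 0 < δ ∧ ∀ (n : ℕ) (σ' : G → Equiv.Perm (Fin n)) (φ : Fin n → X),
      rho2 ρ (fun a => α s (φ a)) (fun a => φ (σ' s a)) < δ →
      ∑ a, (f (α s (φ a)) - f (φ a)) ≤ n * η := by
  obtain ⟨B, hB0, hB⟩ := exists_norm_bound hf
  obtain ⟨δ', hδ'pos, hδ'⟩ := unif_cont hρ hf (half_pos hη)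
  set t : ℝ := η / (4 * B + 4) with ht_def
  have ht : 0 < t := div_pos hη (by linarith)
  refine ⟨δ' * Real.sqrt t, by positivity, ?_⟩
  intro n σ' φ hrho
  rcases Nat.eq_zero_or_pos n with rfl | hn
  · simp
  have hn' : 0 < (n : ℝ) := by exact_mod_cast hn
  have hrw : ∑ a, (f (α s (φ a)) - f (φ a)) = ∑ a, (f (α s (φ a)) - f (φ (σ' s a))) := by
    rw [Finset.sum_sub_distrib, Finset.sum_sub_distrib,
      Equiv.sum_comp (σ' s) (fun a => f (φ a))]
  rw [rho2] at hrho
  have h2 : (1 / (n : ℝ)) * ∑ a, (ρ (α s (φ a)) (φ (σ' s a))) ^ 2 <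
      (δ' * Real.sqrt t) ^ 2 := (Real.sqrt_lt' (by positivity)).1 hrho
  have hδ2 : (δ' * Real.sqrt t) ^ 2 = δ' ^ 2 * t := by
    rw [mul_pow, Real.sq_sqrt ht.le]
  have hsum : ∑ a, (ρ (α s (φ a)) (φ (σ' s a))) ^ 2 < (n : ℝ) * (δ' ^ 2 * t) := by
    rw [← hδ2]
    calc ∑ a, (ρ (α s (φ a)) (φ (σ' s a))) ^ 2
        = (n : ℝ) * ((1 / (n : ℝ)) * ∑ a, (ρ (α s (φ a)) (φ (σ' s a))) ^ 2) := by
          field_simp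
      _ < (n : ℝ) * (δ' * Real.sqrt t) ^ 2 := (mul_lt_mul_iff_right₀ hn').2 h2
  classical
  set bad : Finset (Fin n) :=
    Finset.univ.filter (fun a => δ' ≤ ρ (α s (φ a)) (φ (σ' s a))) with hbad_def
  have hbadcard : (bad.card : ℝ) * δ' ^ 2 ≤ ∑ a, (ρ (α s (φ a)) (φ (σ' s a))) ^ 2 := by
    calc (bad.card : ℝ) * δ' ^ 2 = ∑ _a ∈ bad, δ' ^ 2 := by
          rw [Finset.sum_const, nsmul_eq_mul]
      _ ≤ ∑ a ∈ bad, (ρ (α s (φ a)) (φ (σ' s a))) ^ 2 := by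
          refine Finset.sum_le_sum fun a ha => ?_
          have hmem := (Finset.mem_filter.1 ha).2
          exact pow_le_pow_left₀ hδ'pos.le hmem 2
      _ ≤ ∑ a, (ρ (α s (φ a)) (φ (σ' s a))) ^ 2 :=
          Finset.sum_le_sum_of_subset_of_nonneg (Finset.filter_subset _ _)
            (fun a _ _ => sq_nonneg _)
  have hm : (bad.card : ℝ) ≤ (n : ℝ) * t := by
    have h3 : (bad.card : ℝ) * δ' ^ 2 ≤ ((n : ℝ) * t) * δ' ^ 2 := by
      calc (bad.card : ℝ) * δ' ^ 2 ≤ ∑ a, (ρ (α s (φ a)) (φ (σ' s a))) ^ 2 := hbadcard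
        _ ≤ (n : ℝ) * (δ' ^ 2 * t) := hsum.le
        _ = ((n : ℝ) * t) * δ' ^ 2 := by ring
    exact le_of_mul_le_mul_right h3 (by positivity)
  rw [hrw]
  have hsplit := Finset.sum_filter_add_sum_filter_not Finset.univ
    (fun a => δ' ≤ ρ (α s (φ a)) (φ (σ' s a)))
    (fun a => f (α s (φ a)) - f (φ (σ' s a)))
  have hbadsum : ∑ a ∈ bad, (f (α s (φ a)) - f (φ (σ' s a))) ≤ (bad.card : ℝ) * (2 * B) := by
    calc ∑ a ∈ bad, (f (α s (φ a)) - f (φ (σ' s a))) ≤ ∑ _a ∈ bad, (2 * B) := by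
          refine Finset.sum_le_sum fun a _ => ?_
          have h1 := abs_le.1 (hB (α s (φ a)))
          have h2 := abs_le.1 (hB (φ (σ' s a)))
          linarith [h1.1, h1.2, h2.1, h2.2]
      _ = (bad.card : ℝ) * (2 * B) := by rw [Finset.sum_const, nsmul_eq_mul]
  have hgoodsum : ∑ a ∈ Finset.univ.filter (fun a => ¬ δ' ≤ ρ (α s (φ a)) (φ (σ' s a))),
      (f (α s (φ a)) - f (φ (σ' s a))) ≤ (n : ℝ) * (η / 2) := by
    calc ∑ a ∈ Finset.univ.filter (fun a => ¬ δ' ≤ ρ (α s (φ a)) (φ (σ' s a))),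
        (f (α s (φ a)) - f (φ (σ' s a)))
        ≤ ∑ _a ∈ Finset.univ.filter (fun a => ¬ δ' ≤ ρ (α s (φ a)) (φ (σ' s a))), (η / 2) := by
          refine Finset.sum_le_sum fun a ha => ?_
          have hmem := (Finset.mem_filter.1 ha).2
          push_neg at hmem
          have := hδ' _ _ hmem
          linarith [(abs_le.1 this).2]
      _ ≤ (n : ℝ) * (η / 2) := by
          rw [Finset.sum_const, nsmul_eq_mul]
          have hc : ((Finset.univ.filter
              (fun a => ¬ δ' ≤ ρ (α s (φ a)) (φ (σ' s a)))).card : ℝ) ≤ (n : ℝ) := by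
            have := Finset.card_filter_le Finset.univ
              (fun a => ¬ δ' ≤ ρ (α s (φ a)) (φ (σ' s a)))
            simpa using (by exact_mod_cast this : ((Finset.univ.filter
              (fun a => ¬ δ' ≤ ρ (α s (φ a)) (φ (σ' s a)))).card : ℝ) ≤ ((Finset.univ : Finset (Fin n)).card : ℝ))
          have : (0:ℝ) ≤ η / 2 := by linarith
          nlinarith
  have hts : t * (2 * B) ≤ η / 2 := by
    rw [ht_def]
    rw [div_mul_eq_mul_div, div_le_div_iff₀ (by linarith) (by norm_num)]
    nlinarith
  calc ∑ a, (f (α s (φ a)) - f (φ (σ' s a)))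
      = ∑ a ∈ bad, (f (α s (φ a)) - f (φ (σ' s a)))
        + ∑ a ∈ Finset.univ.filter (fun a => ¬ δ' ≤ ρ (α s (φ a)) (φ (σ' s a))),
          (f (α s (φ a)) - f (φ (σ' s a))) := hsplit.symm
    _ ≤ (bad.card : ℝ) * (2 * B) + (n : ℝ) * (η / 2) := add_le_add hbadsum hgoodsum
    _ ≤ ((n : ℝ) * t) * (2 * B) + (n : ℝ) * (η / 2) := by
        have := mul_le_mul_of_nonneg_right hm (by linarith : (0:ℝ) ≤ 2 * B)
        linarith
    _ ≤ (n : ℝ) * η := by nlinarith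

end Aux2

section Aux3

noncomputable def erealAddIso (c : ℝ) : EReal ≃o EReal where
  toFun x := x + (c : EReal)
  invFun x := x - (c : EReal)
  left_inv _ := EReal.add_sub_cancel_right
  right_inv _ := EReal.sub_add_cancel
  map_rel_iff' := (EReal.addLECancellable_coe c).add_le_add_iff_right

@[simp] lemma erealAddIso_apply (c : ℝ) (x : EReal) : erealAddIso c x = x + (c : EReal) := rfl

lemma iInf_add_coe {ι : Sort*} (g : ι → EReal) (c : ℝ) :
    ⨅ i, (g i + (c : EReal)) = (⨅ i, g i) + (c : EReal) := by
  apply le_antisymm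
  · have h : (⨅ i, (g i + (c : EReal))) - (c : EReal) ≤ ⨅ i, g i := by
      refine le_iInf fun i => ?_
      calc (⨅ j, (g j + (c : EReal))) - (c : EReal)
          ≤ (g i + (c : EReal)) - (c : EReal) := EReal.sub_le_sub (iInf_le _ i) le_rfl
        _ = g i := EReal.add_sub_cancel_right
    calc ⨅ i, (g i + (c : EReal))
        = ((⨅ i, (g i + (c : EReal))) - (c : EReal)) + (c : EReal) :=
          EReal.sub_add_cancel.symm
      _ ≤ (⨅ i, g i) + (c : EReal) := add_le_add_left h _
  · exact le_iInf fun i => add_le_add_left (iInf_le _ i) _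

lemma limsup_add_coe {ι : Type*} (v : ι → EReal) (c : ℝ) (l : Filter ι) :
    Filter.limsup (fun i => v i + (c : EReal)) l = Filter.limsup v l + (c : EReal) := by
  have h := (erealAddIso c).limsup_apply (u := v) (f := l)
  simp only [erealAddIso_apply, Function.comp] at h
  exact h.symm

end Aux3

section Aux4

variable {G : Type*} [Group G] {X : Type*} [TopologicalSpace X] [CompactSpace X]

lemma pressureInf_le_s19 (α : G → X → X) (ρ : X → X → ℝ) (hρ : IsCompatMetric X ρ)
    (d : ℕ → ℕ) (σ : ∀ i, G → Equiv.Perm (Fin (d i))) (hd : Tendsto d atTop atTop)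
    {f : X → ℝ} (hf : Continuous f) {c : ℝ}
    (key : ∀ F₀ : Finset G, F₀.Nonempty → ∀ δ₀ : ℝ, 0 < δ₀ →
      ∃ F : Finset G, F₀ ⊆ F ∧ ∃ δ : ℝ, 0 < δ ∧ δ ≤ δ₀ ∧
        ∀ (n : ℕ) (σ' : G → Equiv.Perm (Fin n)) (φ : Fin n → X),
          φ ∈ MapSet α ρ F δ σ' → ∑ a, f (φ a) ≤ n * c) :
    PressureInf α f ρ d σ ≤ PressureInf α (fun _ => (0 : ℝ)) ρ d σ + (c : EReal) := by
  rw [PressureInf, PressureInf]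
  refine iSup₂_le fun ε hε => ?_
  refine le_trans ?_ (add_le_add_left (le_iSup₂ (f := fun (ε : ℝ) (_ : 0 < ε) =>
    ⨅ (F : Finset G) (_ : F.Nonempty), ⨅ (δ : ℝ) (_ : 0 < δ),
      Filter.limsup (fun i =>
        if (MapSet α ρ F δ (σ i)).Nonempty then
          (((Real.log (Mval α (fun _ => (0 : ℝ)) ρ ε F δ (σ i) (rhoInf ρ))) / (d i : ℝ) : ℝ) : EReal)
        else (⊥ : EReal)) atTop) ε hε) (c : EReal))
  rw [← iInf_add_coe]
  refine le_iInf fun F₀ => ?_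
  rw [← iInf_add_coe]
  refine le_iInf fun hF₀ => ?_
  rw [← iInf_add_coe]
  refine le_iInf fun δ₀ => ?_
  rw [← iInf_add_coe]
  refine le_iInf fun hδ₀ => ?_
  obtain ⟨F, hFF, δ, hδpos, hδδ₀, hkey⟩ := key F₀ hF₀ δ₀ hδ₀
  refine le_trans (iInf_le_of_le F (iInf_le_of_le (hF₀.mono hFF)
    (iInf_le_of_le δ (iInf_le _ hδpos)))) ?_
  rw [← limsup_add_coe]
  refine Filter.limsup_le_limsup ?_
  filter_upwards [hd.eventually_ge_atTop 1] with i hi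
  by_cases hne : (MapSet α ρ F δ (σ i)).Nonempty
  · obtain ⟨φ₀, hφ₀⟩ := hne
    have hsub := MapSet_mono_s19 α (ρ := ρ) (σ i) hFF hδδ₀
    have hne₀ : (MapSet α ρ F₀ δ₀ (σ i)).Nonempty := ⟨φ₀, hsub hφ₀⟩
    rw [if_pos ⟨φ₀, hφ₀⟩, if_pos hne₀]
    rw [← EReal.coe_add, EReal.coe_le_coe_iff]
    have hn0 : (0 : ℝ) < (d i : ℝ) := by exact_mod_cast Nat.lt_of_lt_of_le Nat.zero_lt_one hi
    set Mf := Mval α f ρ ε F δ (σ i) (rhoInf ρ) with hMf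
    set M0 := Mval α (fun _ => (0 : ℝ)) ρ ε F₀ δ₀ (σ i) (rhoInf ρ) with hM0
    have h1 : Real.exp (∑ a, f (φ₀ a)) ≤ Mf := exp_le_Mval α hρ hε hf (σ i) hφ₀
    have hMfpos : 0 < Mf := lt_of_lt_of_le (Real.exp_pos _) h1
    have h2 : Real.exp (∑ a, (0 : ℝ)) ≤ M0 :=
      exp_le_Mval α hρ hε continuous_const (σ i) (hsub hφ₀)
    have hM0pos : 0 < M0 := lt_of_lt_of_le (Real.exp_pos _) h2
    have h3 : Mf ≤ Real.exp ((d i : ℝ) * c) * M0 :=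
      Mval_le_exp_mul α hρ hε hf (σ i) hsub (hkey (d i) (σ i))
    have hlog : Real.log Mf ≤ (d i : ℝ) * c + Real.log M0 := by
      have := Real.log_le_log hMfpos h3
      rwa [Real.log_mul (Real.exp_ne_zero _) (ne_of_gt hM0pos), Real.log_exp] at this
    calc Real.log Mf / (d i : ℝ) ≤ ((d i : ℝ) * c + Real.log M0) / (d i : ℝ) := by
          exact div_le_div_of_nonneg_right hlog hn0.le
      _ = Real.log M0 / (d i : ℝ) + c := by
          field_simp
          ring
  · rw [if_neg hne]
    exact bot_le

end Aux4

theorem stmt19 {G : Type*} [Group G] [Countable G]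
    {X : Type*} [TopologicalSpace X] [CompactSpace X] [TopologicalSpace.MetrizableSpace X]
    [MeasurableSpace X] [BorelSpace X]
    (α : G → X → X) (hα : ContAction G X α)
    (d : ℕ → ℕ) (σ : ∀ i, G → Equiv.Perm (Fin (d i))) (hσ : IsSoficApprox G d σ)
    (ρ : X → X → ℝ) (hρ : IsCompatMetric X ρ)
    (hfin : PressureInf α (fun _ => (0 : ℝ)) ρ d σ ≠ (⊥ : EReal) ∧
      PressureInf α (fun _ => (0 : ℝ)) ρ d σ ≠ (⊤ : EReal))
    (μ : MeasureTheory.SignedMeasure X)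
    (hint : ∀ g : X → ℝ, Continuous g →
      (((∫ x, g x ∂μ.toJordanDecomposition.posPart -
          ∫ x, g x ∂μ.toJordanDecomposition.negPart) : ℝ) : EReal) ≤ PressureInf α g ρ d σ) :
    (∀ A : Set X, MeasurableSet A → 0 ≤ μ A) ∧ μ Set.univ = 1 ∧
    (∀ (s : G) (A : Set X), MeasurableSet A → μ ((α s) ⁻¹' A) = μ A) := by
  classical
  obtain ⟨hbot, htop⟩ := hfin
  set pos := μ.toJordanDecomposition.posPart with hpos_def
  set neg := μ.toJordanDecomposition.negPart with hneg_def
  haveI hposfin : IsFiniteMeasure pos := by rw [hpos_def]; infer_instance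
  haveI hnegfin : IsFiniteMeasure neg := by rw [hneg_def]; infer_instance
  set p : ℝ := (PressureInf α (fun _ => (0 : ℝ)) ρ d σ).toReal with hp_def
  have hP0 : PressureInf α (fun _ => (0 : ℝ)) ρ d σ = (p : EReal) :=
    (EReal.coe_toReal htop hbot).symm
  -- integrability of continuous functions
  have hInt : ∀ (h : X → ℝ), Continuous h → ∀ ν : Measure X, IsFiniteMeasure ν →
      Integrable h ν := by
    intro h hh ν hν
    exact hh.integrable_of_hasCompactSupport ((isClosed_tsupport _).isCompact)
  -- the master inequality
  have main : ∀ (f : X → ℝ), Continuous f → ∀ c : ℝ,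
      (∀ F₀ : Finset G, F₀.Nonempty → ∀ δ₀ : ℝ, 0 < δ₀ →
        ∃ F : Finset G, F₀ ⊆ F ∧ ∃ δ : ℝ, 0 < δ ∧ δ ≤ δ₀ ∧
          ∀ (n : ℕ) (σ' : G → Equiv.Perm (Fin n)) (φ : Fin n → X),
            φ ∈ MapSet α ρ F δ σ' → ∑ a, f (φ a) ≤ n * c) →
      (∫ x, f x ∂pos) - (∫ x, f x ∂neg) ≤ p + c := by
    intro f hf c key
    have h1 := hint f hf
    have h2 := pressureInf_le_s19 α ρ hρ d σ hσ.dim_top hf key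
    rw [hP0] at h2
    have h3 : (((∫ x, f x ∂pos - ∫ x, f x ∂neg : ℝ)) : EReal) ≤ (((p + c : ℝ)) : EReal) := by
      rw [EReal.coe_add]
      exact h1.trans h2
    exact_mod_cast h3
  -- part 2 : total mass
  have hμuniv : (pos Set.univ).toReal - (neg Set.univ).toReal = 1 := by
    have hc : ∀ c : ℝ,
        (pos Set.univ).toReal * c - (neg Set.univ).toReal * c ≤ p + c := by
      intro c
      have := main (fun _ => c) continuous_const c
        (fun F₀ hF₀ δ₀ hδ₀ => ⟨F₀, subset_rfl, δ₀, hδ₀, le_rfl, fun n σ' φ _ => by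
          simp [Finset.sum_const, Finset.card_univ, nsmul_eq_mul]⟩)
      simpa [integral_const, smul_eq_mul, measureReal_def] using this
    by_contra hne
    set m := (pos Set.univ).toReal - (neg Set.univ).toReal with hm_def
    have hΔ : m - 1 ≠ 0 := sub_ne_zero.2 hne
    have h := hc ((|p| + 1) / (m - 1))
    have hq : m * ((|p| + 1) / (m - 1)) = (|p| + 1) / (m - 1) + (|p| + 1) := by
      field_simp
      ring
    have h' : m * ((|p| + 1) / (m - 1)) ≤ p + (|p| + 1) / (m - 1) := by
      calc m * ((|p| + 1) / (m - 1))
          = (pos Set.univ).toReal * ((|p| + 1) / (m - 1))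
            - (neg Set.univ).toReal * ((|p| + 1) / (m - 1)) := by rw [hm_def]; ring
        _ ≤ p + (|p| + 1) / (m - 1) := h
    rw [hq] at h'
    have := le_abs_self p
    linarith
  -- part 1 : positivity
  have hmono : ∀ g : X → ℝ, Continuous g → (∀ x, 0 ≤ g x) →
      ∫ x, g x ∂neg ≤ ∫ x, g x ∂pos := by
    intro g hg hg0
    by_contra hlt
    push_neg at hlt
    set e := ∫ x, g x ∂neg - ∫ x, g x ∂pos with he_def
    have hepos : 0 < e := sub_pos.2 hlt
    set t := (|p| + 1) / e with ht_def
    have ht : 0 < t := div_pos (by positivity) hepos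
    have hmain := main (fun x => -t * g x) (continuous_const.mul hg) 0
      (fun F₀ hF₀ δ₀ hδ₀ => ⟨F₀, subset_rfl, δ₀, hδ₀, le_rfl, fun n σ' φ _ => by
        have hsum : ∑ a, (-t * g (φ a)) ≤ 0 :=
          Finset.sum_nonpos fun a _ =>
            mul_nonpos_of_nonpos_of_nonneg (by linarith) (hg0 _)
        simpa using hsum⟩)
    rw [integral_const_mul, integral_const_mul] at hmain
    have htE : t * e = |p| + 1 := div_mul_cancel₀ _ (ne_of_gt hepos)
    have := le_abs_self p
    nlinarith [hmain]
  have hclosed : ∀ C : Set X, IsClosed C → neg C ≤ pos C := by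
    intro C hC
    have happrox : ∀ n : ℕ, neg C ≤ ∫⁻ x, (hC.apprSeq n x : ENNReal) ∂neg :=
      fun n => HasOuterApproxClosed.measure_le_lintegral hC neg n
    have hint2 : ∀ n : ℕ, ∫⁻ x, (hC.apprSeq n x : ENNReal) ∂neg
        ≤ ∫⁻ x, (hC.apprSeq n x : ENNReal) ∂pos := by
      intro n
      have hcont : Continuous fun x => ((hC.apprSeq n x : ℝ)) :=
        NNReal.continuous_coe.comp (hC.apprSeq n).continuous
      have hnn : ∀ x, (0 : ℝ) ≤ (hC.apprSeq n x : ℝ) := fun x => (hC.apprSeq n x).2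
      rw [lintegral_coe_eq_integral _ (hInt _ hcont neg hnegfin),
        lintegral_coe_eq_integral _ (hInt _ hcont pos hposfin)]
      exact ENNReal.ofReal_le_ofReal (hmono _ hcont hnn)
    have hlim_pos := HasOuterApproxClosed.tendsto_lintegral_apprSeq hC pos
    exact ge_of_tendsto' hlim_pos (fun n => (happrox n).trans (hint2 n))
  have hAle : ∀ A : Set X, MeasurableSet A → neg A ≤ pos A := by
    intro A hA
    refine ENNReal.le_of_forall_pos_le_add fun ε hε _ => ?_
    obtain ⟨C, hCA, hCclosed, hC⟩ := hA.exists_isClosed_lt_add (μ := neg)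
      (measure_ne_top neg A) ((ENNReal.coe_pos.2 hε).ne')
    calc neg A ≤ neg C + (ε : ENNReal) := hC.le
      _ ≤ pos C + (ε : ENNReal) := add_le_add_left (hclosed C hCclosed) _
      _ ≤ pos A + (ε : ENNReal) := add_le_add_left (measure_mono hCA) _
  have hμapply : ∀ A : Set X, MeasurableSet A →
      μ A = (pos A).toReal - (neg A).toReal := by
    intro A hA
    conv_lhs => rw [← μ.toSignedMeasure_toJordanDecomposition]
    rw [show μ.toJordanDecomposition.toSignedMeasure
        = μ.toJordanDecomposition.posPart.toSignedMeasure
          - μ.toJordanDecomposition.negPart.toSignedMeasure from rfl]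
    rw [MeasureTheory.VectorMeasure.sub_apply,
      MeasureTheory.Measure.toSignedMeasure_apply_measurable hA,
      MeasureTheory.Measure.toSignedMeasure_apply_measurable hA]
    rfl
  -- invariance
  have hs_meas : ∀ s : G, Measurable (α s) := fun s => (hα.cont s).measurable
  have hinvI : ∀ (s : G) (g : X → ℝ), Continuous g →
      (∫ x, g (α s x) ∂pos) - (∫ x, g (α s x) ∂neg)
        = (∫ x, g x ∂pos) - (∫ x, g x ∂neg) := by
    intro s g hg
    have hgs : Continuous fun x => g (α s x) := hg.comp (hα.cont s)
    set D := ((∫ x, g (α s x) ∂pos) - (∫ x, g (α s x) ∂neg))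
      - ((∫ x, g x ∂pos) - (∫ x, g x ∂neg)) with hD_def
    clear_value D
    have hTD : ∀ t : ℝ, t * D ≤ p := by
      intro t
      have hkey : ∀ η : ℝ, 0 < η → t * D ≤ p + η := by
        intro η hη
        obtain ⟨δ₁, hδ₁pos, hδ₁⟩ :=
          sum_est α hρ (f := fun x => t * g x) (continuous_const.mul hg) s hη
        have hmain := main (fun x => t * g (α s x) - t * g x)
          ((continuous_const.mul hgs).sub (continuous_const.mul hg)) η
          (fun F₀ hF₀ δ₀ hδ₀ => ⟨insert s F₀, Finset.subset_insert _ _,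
            min δ₀ δ₁, lt_min hδ₀ hδ₁pos, min_le_left _ _, fun n σ' φ hφ => by
              have h := hδ₁ n σ' φ
                (lt_of_lt_of_le (hφ s (Finset.mem_insert_self s F₀)) (min_le_right _ _))
              simpa using h⟩)
        have hi1 := hInt _ hgs pos hposfin
        have hi2 := hInt _ hg pos hposfin
        have hi3 := hInt _ hgs neg hnegfin
        have hi4 := hInt _ hg neg hnegfin
        rw [integral_sub ((hInt (fun x => t * g (α s x)) (continuous_const.mul hgs) pos hposfin))
            ((hInt (fun x => t * g x) (continuous_const.mul hg) pos hposfin)),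
          integral_sub ((hInt (fun x => t * g (α s x)) (continuous_const.mul hgs) neg hnegfin))
            ((hInt (fun x => t * g x) (continuous_const.mul hg) neg hnegfin)),
          integral_const_mul, integral_const_mul, integral_const_mul,
          integral_const_mul] at hmain
        rw [hD_def]
        nlinarith [hmain]
      by_contra hgt
      push_neg at hgt
      have := hkey ((t * D - p) / 2) (by linarith)
      linarith
    have hDzero : D = 0 := by
      by_contra hDne
      have h := hTD ((|p| + 1) / D)
      rw [div_mul_cancel₀ _ hDne] at h
      have := le_abs_self p
      linarith
    rw [hD_def] at hDzero
    linarith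
  refine ⟨?_, ?_, ?_⟩
  · intro A hA
    rw [hμapply A hA]
    have h := hAle A hA
    have := (ENNReal.toReal_le_toReal (measure_ne_top neg A) (measure_ne_top pos A)).2 h
    linarith
  · rw [hμapply Set.univ MeasurableSet.univ]
    exact hμuniv
  · intro s A hA
    haveI : IsFiniteMeasure (Measure.map (α s) pos) := Measure.isFiniteMeasure_map pos (α s)
    haveI : IsFiniteMeasure (Measure.map (α s) neg) := Measure.isFiniteMeasure_map neg (α s)
    have hmeq : Measure.map (α s) pos + neg = Measure.map (α s) neg + pos := by
      apply MeasureTheory.ext_of_forall_lintegral_eq_of_IsFiniteMeasure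
      intro fn
      have hfnm : Measurable fun x => ((fn x : ENNReal)) :=
        measurable_coe_nnreal_ennreal.comp fn.continuous.measurable
      have hfnc : Continuous fun x => ((fn x : ℝ)) :=
        NNReal.continuous_coe.comp fn.continuous
      have hfncs : Continuous fun x => ((fn (α s x) : ℝ)) := hfnc.comp (hα.cont s)
      rw [lintegral_add_measure, lintegral_add_measure,
        lintegral_map hfnm (hs_meas s), lintegral_map hfnm (hs_meas s)]
      have e1 : ∫⁻ x, ((fn (α s x) : ENNReal)) ∂pos
          = ENNReal.ofReal (∫ x, ((fn (α s x) : ℝ)) ∂pos) :=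
        lintegral_coe_eq_integral _ (hInt _ hfncs pos hposfin)
      have e2 : ∫⁻ x, ((fn x : ENNReal)) ∂neg
          = ENNReal.ofReal (∫ x, ((fn x : ℝ)) ∂neg) :=
        lintegral_coe_eq_integral _ (hInt _ hfnc neg hnegfin)
      have e3 : ∫⁻ x, ((fn (α s x) : ENNReal)) ∂neg
          = ENNReal.ofReal (∫ x, ((fn (α s x) : ℝ)) ∂neg) :=
        lintegral_coe_eq_integral _ (hInt _ hfncs neg hnegfin)
      have e4 : ∫⁻ x, ((fn x : ENNReal)) ∂pos
          = ENNReal.ofReal (∫ x, ((fn x : ℝ)) ∂pos) :=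
        lintegral_coe_eq_integral _ (hInt _ hfnc pos hposfin)
      rw [e1, e2, e3, e4]
      have hA : (0:ℝ) ≤ ∫ x, ((fn (α s x) : ℝ)) ∂pos := integral_nonneg fun x => (fn (α s x)).2
      have hB : (0:ℝ) ≤ ∫ x, ((fn x : ℝ)) ∂neg := integral_nonneg fun x => (fn x).2
      have hC : (0:ℝ) ≤ ∫ x, ((fn (α s x) : ℝ)) ∂neg := integral_nonneg fun x => (fn (α s x)).2
      have hD2 : (0:ℝ) ≤ ∫ x, ((fn x : ℝ)) ∂pos := integral_nonneg fun x => (fn x).2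
      rw [← ENNReal.ofReal_add hA hB, ← ENNReal.ofReal_add hC hD2]
      have hJ := hinvI s (fun x => (fn x : ℝ)) hfnc
      congr 1
      linarith
    have happ := congrArg (fun ν : Measure X => ν A) hmeq
    simp only [Measure.coe_add, Pi.add_apply] at happ
    rw [Measure.map_apply (hs_meas s) hA, Measure.map_apply (hs_meas s) hA] at happ
    have htr := congrArg ENNReal.toReal happ
    rw [ENNReal.toReal_add (measure_ne_top _ _) (measure_ne_top _ _),
      ENNReal.toReal_add (measure_ne_top _ _) (measure_ne_top _ _)] at htr
    rw [hμapply _ (hA.preimage (hs_meas s)), hμapply _ hA]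
    linarith

end Sofic
end
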